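/- arXiv:1910.01633 — 2 statements merged into one kernel-verified Lean document; each statement's English description precedes it below -/
import Mathlib

section
/- Let Q be a connected quiver, k a field, θ : V → ℝ generic with Σ_{i∈V} θ_i = 0, and (x, x*) a toric representation of the double quiver of Q. Then (x, x*) is θ-stable if and only if there exists a spanning tree T of Q such that for every e ∈ T: if e is θ-forward then x_e ≠ 0, and if e is θ-backward then x*_e ≠ 0. -/
open Classical Finset

noncomputable section

/-- The equivalence relation on vertices generated by the edges in `D`:
`t e` and `h e` are related for every `e ∈ D`. -/
def joinedRel {V E : Type} (tl hd : E → V) (D : Set E) : V → V → Prop :=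
  Relation.EqvGen fun a b => ∃ e ∈ D, (tl e = a ∧ hd e = b) ∨ (tl e = b ∧ hd e = a)

/-- The graph `(V, D)` is connected. -/
def IsConn {V E : Type} (tl hd : E → V) (D : Set E) : Prop :=
  ∀ a b : V, joinedRel tl hd D a b

/-- `T ⊆ E` is a spanning tree: `(V, T)` is connected and `#T = #V - 1`. -/
def IsSpanningTree {V E : Type} [Fintype V] (tl hd : E → V) (T : Finset E) : Prop :=
  IsConn tl hd ↑T ∧ T.card + 1 = Fintype.card V

/-- The connected component of the vertex `v` in the graph with edge set `D`. -/
def component {V E : Type} [Fintype V] (tl hd : E → V) (D : Finset E) (v : V) : Finset V :=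
  Finset.univ.filter fun j => joinedRel tl hd (↑D) v j

/-- Genericity of a stability parameter. -/
def Generic {V : Type} [Fintype V] (θ : V → ℝ) : Prop :=
  ∀ J : Finset V, J.Nonempty → J ≠ Finset.univ → ∑ i ∈ J, θ i ≠ 0

/-- Auxiliary recursion computing the external activity: `S` is the set of remaining
edges and `C` the set of already contracted edges (an edge of the current, partially
contracted, quiver is a loop iff its endpoints are joined by edges of `C`).  At each
step the largest non-loop edge is contracted (if it lies in `T`) or deleted (otherwise);
once no non-loop edge remains (i.e. the contracted quiver has one vertex), the number of
remaining (loop) edges is returned. -/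
def extactAux {V E : Type} [LinearOrder E] (tl hd : E → V) (T : Finset E)
    (S C : Finset E) : ℕ :=
  if hne : (S.filter fun e => ¬ joinedRel tl hd (↑C) (tl e) (hd e)).Nonempty then
    if (S.filter fun e => ¬ joinedRel tl hd (↑C) (tl e) (hd e)).max' hne ∈ T then
      extactAux tl hd T
        (S.erase ((S.filter fun e => ¬ joinedRel tl hd (↑C) (tl e) (hd e)).max' hne))
        (insert ((S.filter fun e => ¬ joinedRel tl hd (↑C) (tl e) (hd e)).max' hne) C)
    else
      extactAux tl hd T
        (S.erase ((S.filter fun e => ¬ joinedRel tl hd (↑C) (tl e) (hd e)).max' hne)) C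
  else S.card
termination_by S.card
decreasing_by
  · exact Finset.card_lt_card (Finset.erase_ssubset
      (Finset.mem_of_mem_filter _ (Finset.max'_mem _ hne)))
  · exact Finset.card_lt_card (Finset.erase_ssubset
      (Finset.mem_of_mem_filter _ (Finset.max'_mem _ hne)))

/-- The external activity `extact(Q, T)` of a spanning tree `T`, with respect to a fixed
linear order on the edges. -/
def extact {V E : Type} [Fintype E] [LinearOrder E] (tl hd : E → V) (T : Finset E) : ℕ :=
  extactAux tl hd T Finset.univ ∅

/-- Isomorphism of toric representations. -/
def IsoRep {V E k : Type} [Field k] (tl hd : E → V) (x x' : E → k) : Prop :=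
  ∃ g : V → kˣ, ∀ e, x' e = (g (hd e) : k) * x e * ((g (tl e) : k))⁻¹

/-- Gauge equivalence (the `(kˣ)^V`-action) for representations of the double quiver. -/
def GaugeEquiv {V E k : Type} [Field k] (tl hd : E → V) (x xs x' xs' : E → k) : Prop :=
  ∃ g : V → kˣ,
    (∀ e, x' e = (g (hd e) : k) * x e * ((g (tl e) : k))⁻¹) ∧
    (∀ e, xs' e = (g (tl e) : k) * xs e * ((g (hd e) : k))⁻¹)

/-- The moment map equations for the parameter `lam`. -/
def MomentMap {V E k : Type} [Fintype E] [Field k] (tl hd : E → V) (lam : V → k)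
    (x xs : E → k) : Prop :=
  ∀ i : V,
    (∑ e ∈ Finset.univ.filter fun e => hd e = i, x e * xs e) -
      (∑ e ∈ Finset.univ.filter fun e => tl e = i, x e * xs e) = lam i

/-- `J` is closed for `(x, xs)`, with only the conditions for edges in `S` imposed. -/
def ClosedOn {V E k : Type} [Zero k] (tl hd : E → V) (x xs : E → k) (S : Set E)
    (J : Finset V) : Prop :=
  ∀ e ∈ S, (x e ≠ 0 → tl e ∈ J → hd e ∈ J) ∧ (xs e ≠ 0 → hd e ∈ J → tl e ∈ J)

/-- `θ`-stability of `(x, xs)` on the subquiver with vertex set `W` and edge set `S`. -/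
def StableSub {V E k : Type} [Zero k] (tl hd : E → V) (θ : V → ℝ) (x xs : E → k)
    (W : Finset V) (S : Set E) : Prop :=
  ∀ J : Finset V, J ⊆ W → ClosedOn tl hd x xs S J → J.Nonempty → J ≠ W →
    0 < ∑ i ∈ J, θ i

/-- Destabilising subsets for `(x, xs)` on the subquiver `(W, S)`. -/
def DestabSub {V E k : Type} [Zero k] (tl hd : E → V) (θ : V → ℝ) (x xs : E → k)
    (W : Finset V) (S : Set E) (J : Finset V) : Prop :=
  J ⊆ W ∧ J.Nonempty ∧ J ≠ W ∧ ClosedOn tl hd x xs S J ∧ ∑ i ∈ J, θ i ≤ 0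

/-- The projection identifying the vertex `a` with the vertex `b`, i.e. the quotient map
`V → V/e` for the contraction of an edge with tail `a` and head `b` (the quotient being
modelled on the subtype of vertices different from `a`). -/
def cProj {V : Type} (a b : V) (h : b ≠ a) (i : V) : {j : V // j ≠ a} :=
  if hi : i = a then ⟨b, h⟩ else ⟨i, hi⟩

/-- Tail map of the contracted quiver `Q/e`. -/
def contractTl {V E : Type} (tl hd : E → V) (e : E) (h : hd e ≠ tl e)
    (f : {f : E // f ≠ e}) : {j : V // j ≠ tl e} := cProj (tl e) (hd e) h (tl f.1)

/-- Head map of the contracted quiver `Q/e`. -/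
def contractHd {V E : Type} (tl hd : E → V) (e : E) (h : hd e ≠ tl e)
    (f : {f : E // f ≠ e}) : {j : V // j ≠ tl e} := cProj (tl e) (hd e) h (hd f.1)

/-- Contraction `θ/e` (or `λ/e`) of a parameter along the contraction of an edge with
tail `a` and head `b`: the new vertex `ι` (represented by `b`) gets the value
`θ a + θ b`, all other vertices keep their values. -/
def contractParam {V R : Type} [Add R] (a b : V) (θ : V → R) (j : {i : V // i ≠ a}) : R :=
  if (j : V) = b then θ a + θ b else θ (j : V)

/-- The graph of the tree-assignment recursion: `TreeAssign tl hd x xs W S θ T` means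
that the recursion, applied to the restriction of `(x, xs)` to the subquiver with vertex
set `W` and edge set `S` and with stability parameter `θ` (and the linear order induced
from `E`), produces the spanning tree `T`. -/
inductive TreeAssign {V E k : Type} [Fintype V] [LinearOrder E] [Zero k]
    (tl hd : E → V) (x xs : E → k) :
    Finset V → Finset E → (V → ℝ) → Finset E → Prop
  | base (W : Finset V) (S : Finset E) (θ : V → ℝ) (hW : W.card = 1) :
      TreeAssign tl hd x xs W S θ ∅
  | delete (W : Finset V) (S : Finset E) (θ : V → ℝ) (e : E)
      (he : e ∈ S) (hloop : tl e ≠ hd e)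
      (hsmall : ∀ f ∈ S, tl f ≠ hd f → e ≤ f)
      (hstab : StableSub tl hd θ x xs W ↑(S.erase e))
      (T : Finset E) (ih : TreeAssign tl hd x xs W (S.erase e) θ T) :
      TreeAssign tl hd x xs W S θ T
  | contract (W : Finset V) (S : Finset E) (θ : V → ℝ) (e : E) (a b : V)
      (he : e ∈ S) (hloop : tl e ≠ hd e)
      (hsmall : ∀ f ∈ S, tl f ≠ hd f → e ≤ f)
      (hab : (a = tl e ∧ b = hd e) ∨ (a = hd e ∧ b = tl e))
      (J₁ : Finset V)
      (hJ₁ : DestabSub tl hd θ x xs W ↑(S.erase e) J₁)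
      (hall : ∀ J, DestabSub tl hd θ x xs W ↑(S.erase e) J → a ∈ J ∧ b ∉ J)
      (hmin : ∀ J, DestabSub tl hd θ x xs W ↑(S.erase e) J →
        ∑ i ∈ J₁, θ i ≤ ∑ i ∈ J, θ i)
      (T₁ T₂ : Finset E)
      (ih₁ : TreeAssign tl hd x xs J₁ (S.filter fun f => tl f ∈ J₁ ∧ hd f ∈ J₁)
          (fun i => if i = a then θ i - ∑ j ∈ J₁, θ j
            else if i = b then θ i + ∑ j ∈ J₁, θ j else θ i) T₁)
      (ih₂ : TreeAssign tl hd x xs (W \ J₁)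
          (S.filter fun f => tl f ∈ W \ J₁ ∧ hd f ∈ W \ J₁)
          (fun i => if i = a then θ i - ∑ j ∈ J₁, θ j
            else if i = b then θ i + ∑ j ∈ J₁, θ j else θ i) T₂) :
      TreeAssign tl hd x xs W S θ (insert e (T₁ ∪ T₂))

/-- Points of the cell `M_T`: `θ`-stable pairs satisfying the moment map equations whose
assigned spanning tree is `T`. -/
def CellPt {V E k : Type} [Fintype V] [Fintype E] [LinearOrder E] [Field k]
    (tl hd : E → V) (lam : V → k) (θ : V → ℝ) (T : Finset E) : Type :=
  {p : (E → k) × (E → k) //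
    StableSub tl hd θ p.1 p.2 Finset.univ Set.univ ∧
    MomentMap tl hd lam p.1 p.2 ∧
    TreeAssign tl hd p.1 p.2 Finset.univ Finset.univ θ T}

/-- The cell `M_T` of the Nakajima orbit set: `(kˣ)^V`-orbits of points. -/
def Cell {V E k : Type} [Fintype V] [Fintype E] [LinearOrder E] [Field k]
    (tl hd : E → V) (lam : V → k) (θ : V → ℝ) (T : Finset E) : Type :=
  Quot fun p q : CellPt tl hd lam θ T => GaugeEquiv tl hd p.1.1 p.1.2 q.1.1 q.1.2



section Statement10Helpers

variable {V E : Type} {tl hd : E → V}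

lemma jr_refl (D : Set E) (a : V) : joinedRel tl hd D a a := Relation.EqvGen.refl a

lemma jr_symm {D : Set E} {a b : V} (h : joinedRel tl hd D a b) : joinedRel tl hd D b a :=
  Relation.EqvGen.symm _ _ h

lemma jr_trans {D : Set E} {a b c : V} (h : joinedRel tl hd D a b)
    (h' : joinedRel tl hd D b c) : joinedRel tl hd D a c :=
  Relation.EqvGen.trans _ _ _ h h'

lemma jr_edge {D : Set E} {e : E} (he : e ∈ D) : joinedRel tl hd D (tl e) (hd e) :=
  Relation.EqvGen.rel _ _ ⟨e, he, Or.inl ⟨rfl, rfl⟩⟩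

lemma jr_mono {D D' : Set E} (h : D ⊆ D') {a b : V} (hj : joinedRel tl hd D a b) :
    joinedRel tl hd D' a b := by
  induction hj with
  | rel p q hr => exact .rel _ _ (by obtain ⟨e, he, h1⟩ := hr; exact ⟨e, h he, h1⟩)
  | refl p => exact .refl p
  | symm p q _ ih => exact .symm _ _ ih
  | trans p q r _ _ ih1 ih2 => exact .trans _ _ _ ih1 ih2

lemma jr_inv {D : Set E} (P : V → Prop) (hP : ∀ e ∈ D, (P (tl e) ↔ P (hd e)))
    {a b : V} (h : joinedRel tl hd D a b) : P a ↔ P b := by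
  induction h with
  | rel p q hr =>
    obtain ⟨e, he, ⟨h1, h2⟩ | ⟨h1, h2⟩⟩ := hr
    · subst h1; subst h2; exact hP e he
    · subst h1; subst h2; exact (hP e he).symm
  | refl p => exact Iff.rfl
  | symm p q _ ih => exact ih.symm
  | trans p q r _ _ ih1 ih2 => exact ih1.trans ih2

lemma jr_split {D : Set E} {d : E} {a b : V} (h : joinedRel tl hd D a b) :
    joinedRel tl hd (D \ {d}) a b ∨
    ((joinedRel tl hd (D \ {d}) a (tl d) ∨ joinedRel tl hd (D \ {d}) a (hd d)) ∧
     (joinedRel tl hd (D \ {d}) b (tl d) ∨ joinedRel tl hd (D \ {d}) b (hd d))) := by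
  induction h with
  | rel p q hr =>
    obtain ⟨e, he, ⟨h1, h2⟩ | ⟨h1, h2⟩⟩ := hr <;> subst h1 <;> subst h2
    · by_cases hed : e = d
      · subst hed; exact Or.inr ⟨Or.inl (jr_refl _ _), Or.inr (jr_refl _ _)⟩
      · exact Or.inl (jr_edge ⟨he, by simpa using hed⟩)
    · by_cases hed : e = d
      · subst hed; exact Or.inr ⟨Or.inr (jr_refl _ _), Or.inl (jr_refl _ _)⟩
      · exact Or.inl (jr_symm (jr_edge ⟨he, by simpa using hed⟩))
  | refl p => exact Or.inl (jr_refl _ _)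
  | symm p q _ ih =>
    rcases ih with h | ⟨h1, h2⟩
    · exact Or.inl (jr_symm h)
    · exact Or.inr ⟨h2, h1⟩
  | trans p q r _ _ ih1 ih2 =>
    rcases ih1 with h1 | ⟨ha, hb⟩
    · rcases ih2 with h2 | ⟨hc, hd'⟩
      · exact Or.inl (jr_trans h1 h2)
      · exact Or.inr ⟨hc.imp (jr_trans h1) (jr_trans h1), hd'⟩
    · rcases ih2 with h2 | ⟨hc, hd'⟩
      · exact Or.inr ⟨ha, hb.imp (jr_trans (jr_symm h2)) (jr_trans (jr_symm h2))⟩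
      · exact Or.inr ⟨ha, hd'⟩

lemma jr_filter {D : Set E} (A : Set V) (hA : ∀ e ∈ D, (tl e ∈ A ↔ hd e ∈ A))
    {a b : V} (h : joinedRel tl hd D a b) (ha : a ∈ A) :
    joinedRel tl hd {f | f ∈ D ∧ tl f ∈ A} a b := by
  revert ha
  induction h with
  | rel p q hr =>
    intro hp
    obtain ⟨e, he, ⟨h1, h2⟩ | ⟨h1, h2⟩⟩ := hr <;> subst h1 <;> subst h2
    · exact .rel _ _ ⟨e, ⟨he, hp⟩, .inl ⟨rfl, rfl⟩⟩
    · exact .rel _ _ ⟨e, ⟨he, (hA e he).2 hp⟩, .inr ⟨rfl, rfl⟩⟩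
  | refl p => intro _; exact jr_refl _ _
  | symm p q h ih =>
    intro hq
    exact jr_symm (ih ((jr_inv (· ∈ A) hA h).2 hq))
  | trans p q r h1 h2 ih1 ih2 =>
    intro hp
    exact jr_trans (ih1 hp) (ih2 ((jr_inv (· ∈ A) hA h1).1 hp))

lemma jr_replace {D : Set E} {e : E} (hde : joinedRel tl hd (D \ {e}) (tl e) (hd e))
    {a b : V} (h : joinedRel tl hd D a b) : joinedRel tl hd (D \ {e}) a b := by
  induction h with
  | rel p q hr =>
    obtain ⟨f, hf, ⟨h1, h2⟩ | ⟨h1, h2⟩⟩ := hr <;> subst h1 <;> subst h2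
    · by_cases hfe : f = e
      · subst hfe; exact hde
      · exact jr_edge ⟨hf, by simpa using hfe⟩
    · by_cases hfe : f = e
      · subst hfe; exact jr_symm hde
      · exact jr_symm (jr_edge ⟨hf, by simpa using hfe⟩)
  | refl p => exact jr_refl _ _
  | symm _ _ _ ih => exact jr_symm ih
  | trans _ _ _ _ _ ih1 ih2 => exact jr_trans ih1 ih2

lemma conn_card_le : ∀ (D : Finset E) (W : Finset V),
    (∀ a ∈ W, ∀ b ∈ W, joinedRel tl hd ↑D a b) → W.card ≤ D.card + 1 := by
  intro D
  induction D using Finset.strongInduction with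
  | _ D ih =>
    intro W hconn
    rcases D.eq_empty_or_nonempty with rfl | ⟨d, hd'⟩
    · rcases W.eq_empty_or_nonempty with rfl | ⟨a, ha⟩
      · simp
      · have hsub : W ⊆ {a} := by
          intro b hb
          have h := jr_inv (fun v => v = a) (by simp) (hconn a ha b hb)
          simp [(h.1 rfl).symm]
        simpa using Finset.card_le_card hsub
    · by_cases hc2 : ∀ a ∈ W, ∀ b ∈ W, joinedRel tl hd ↑(D.erase d) a b
      · have h1 := ih (D.erase d) (Finset.erase_ssubset hd') W hc2
        have h2 := Finset.card_erase_of_mem hd'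
        have h3 : 0 < D.card := Finset.card_pos.2 ⟨d, hd'⟩
        omega
      · push_neg at hc2
        obtain ⟨a₀, ha₀, b₀, hb₀, hnj⟩ := hc2
        rw [show ((D.erase d : Finset E) : Set E) = ↑D \ {d} from Finset.coe_erase _ _] at hnj
        have hsplit : ∀ w ∈ W, joinedRel tl hd (↑D \ {d}) w (tl d) ∨
            joinedRel tl hd (↑D \ {d}) w (hd d) := by
          intro w hw
          rcases jr_split (d := d) (hconn w hw b₀ hb₀) with h | ⟨h1, _⟩
          · rcases jr_split (d := d) (hconn a₀ ha₀ b₀ hb₀) with h' | ⟨_, h2'⟩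
            · exact absurd h' hnj
            · exact h2'.imp (jr_trans h) (jr_trans h)
          · exact h1
        have hnj2 : ¬ joinedRel tl hd (↑D \ {d}) (tl d) (hd d) := by
          intro hj
          rcases hsplit a₀ ha₀ with h | h
          · rcases hsplit b₀ hb₀ with h' | h'
            · exact hnj (jr_trans h (jr_symm h'))
            · exact hnj (jr_trans (jr_trans h hj) (jr_symm h'))
          · rcases hsplit b₀ hb₀ with h' | h'
            · exact hnj (jr_trans (jr_trans h (jr_symm hj)) (jr_symm h'))
            · exact hnj (jr_trans h (jr_symm h'))
        set C1 : Set V := {v | joinedRel tl hd (↑D \ {d}) (tl d) v} with hC1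
        set C2 : Set V := {v | joinedRel tl hd (↑D \ {d}) (hd d) v} with hC2
        set W1 := W.filter (fun w => joinedRel tl hd (↑D \ {d}) (tl d) w) with hW1
        set W2 := W.filter (fun w => ¬ joinedRel tl hd (↑D \ {d}) (tl d) w) with hW2
        set D1 := (D.erase d).filter
          (fun f => joinedRel tl hd (↑D \ {d}) (tl d) (tl f)) with hD1
        set D2 := (D.erase d).filter
          (fun f => joinedRel tl hd (↑D \ {d}) (hd d) (tl f)) with hD2
        have hinv1 : ∀ e ∈ (↑D \ {d} : Set E), (tl e ∈ C1 ↔ hd e ∈ C1) := fun e he =>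
          ⟨fun h => jr_trans h (jr_edge he), fun h => jr_trans h (jr_symm (jr_edge he))⟩
        have hinv2 : ∀ e ∈ (↑D \ {d} : Set E), (tl e ∈ C2 ↔ hd e ∈ C2) := fun e he =>
          ⟨fun h => jr_trans h (jr_edge he), fun h => jr_trans h (jr_symm (jr_edge he))⟩
        have hD1coe : (↑D1 : Set E) = {f | f ∈ (↑D \ {d} : Set E) ∧ tl f ∈ C1} := by
          ext f
          simp only [hD1, Finset.coe_filter, Set.mem_setOf_eq, Finset.mem_erase,
            Set.mem_diff, Finset.mem_coe, Set.mem_singleton_iff, hC1]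
          tauto
        have hD2coe : (↑D2 : Set E) = {f | f ∈ (↑D \ {d} : Set E) ∧ tl f ∈ C2} := by
          ext f
          simp only [hD2, Finset.coe_filter, Set.mem_setOf_eq, Finset.mem_erase,
            Set.mem_diff, Finset.mem_coe, Set.mem_singleton_iff, hC2]
          tauto
        have hconn1 : ∀ a ∈ W1, ∀ b ∈ W1, joinedRel tl hd ↑D1 a b := by
          intro a ha b hb
          rw [hW1, Finset.mem_filter] at ha hb
          have hab : joinedRel tl hd (↑D \ {d}) a b := jr_trans (jr_symm ha.2) hb.2
          rw [hD1coe]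
          exact jr_filter C1 hinv1 hab ha.2
        have hconn2 : ∀ a ∈ W2, ∀ b ∈ W2, joinedRel tl hd ↑D2 a b := by
          intro a ha b hb
          rw [hW2, Finset.mem_filter] at ha hb
          have ha2 : joinedRel tl hd (↑D \ {d}) (hd d) a :=
            jr_symm ((hsplit a ha.1).resolve_left (fun h => ha.2 (jr_symm h)))
          have hb2 : joinedRel tl hd (↑D \ {d}) (hd d) b :=
            jr_symm ((hsplit b hb.1).resolve_left (fun h => hb.2 (jr_symm h)))
          rw [hD2coe]
          exact jr_filter C2 hinv2 (jr_trans (jr_symm ha2) hb2) ha2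
        have hdisj : Disjoint D1 D2 := by
          rw [Finset.disjoint_left]
          intro f hf1 hf2
          rw [hD1, Finset.mem_filter] at hf1
          rw [hD2, Finset.mem_filter] at hf2
          exact hnj2 (jr_trans hf1.2 (jr_symm hf2.2))
        have hcard12 : D1.card + D2.card ≤ D.card - 1 := by
          have hu : D1 ∪ D2 ⊆ D.erase d :=
            Finset.union_subset (Finset.filter_subset _ _) (Finset.filter_subset _ _)
          have := Finset.card_le_card hu
          rw [Finset.card_union_of_disjoint hdisj] at this
          rw [Finset.card_erase_of_mem hd'] at this
          exact this
        have hI1 := ih D1 (lt_of_le_of_lt (Finset.filter_subset _ _)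
          (Finset.erase_ssubset hd')) W1 hconn1
        have hI2 := ih D2 (lt_of_le_of_lt (Finset.filter_subset _ _)
          (Finset.erase_ssubset hd')) W2 hconn2
        have hW12 : W1.card + W2.card = W.card :=
          Finset.card_filter_add_card_filter_not _
        have h3 : 0 < D.card := Finset.card_pos.2 ⟨d, hd'⟩
        omega


variable [Fintype V]

lemma mem_component {D : Finset E} {v j : V} :
    j ∈ component tl hd D v ↔ joinedRel tl hd ↑D v j := by
  simp [component]

lemma comp_subset_of_inside {W : Finset V} {D : Finset E}
    (hin : ∀ f ∈ D, tl f ∈ W ∧ hd f ∈ W) {v : V} (hv : v ∈ W) :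
    component tl hd D v ⊆ W := by
  intro j hj
  rw [mem_component] at hj
  exact (jr_inv (· ∈ W)
    (fun f hf => iff_of_true (hin f hf).1 (hin f hf).2) hj).1 hv

lemma tree_delete (W : Finset V) (T : Finset E)
    (hconn : ∀ a ∈ W, ∀ b ∈ W, joinedRel tl hd ↑T a b)
    (hcard : T.card + 1 = W.card) {e : E} (he : e ∈ T) :
    ¬ joinedRel tl hd ↑(T.erase e) (tl e) (hd e) := by
  intro hj
  rw [Finset.coe_erase] at hj
  have hconn' : ∀ a ∈ W, ∀ b ∈ W, joinedRel tl hd ↑(T.erase e) a b := by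
    intro a ha b hb
    rw [Finset.coe_erase]
    exact jr_replace hj (hconn a ha b hb)
  have h1 := conn_card_le (T.erase e) W hconn'
  rw [Finset.card_erase_of_mem he] at h1
  have h2 : 0 < T.card := card_pos.2 ⟨e, he⟩
  omega

lemma tree_cut (W : Finset V) (T : Finset E)
    (hin : ∀ f ∈ T, tl f ∈ W ∧ hd f ∈ W)
    (hconn : ∀ a ∈ W, ∀ b ∈ W, joinedRel tl hd ↑T a b)
    (hcard : T.card + 1 = W.card) {e : E} (he : e ∈ T) :
    component tl hd (T.erase e) (tl e) ∪ component tl hd (T.erase e) (hd e) = W ∧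
    Disjoint (component tl hd (T.erase e) (tl e))
      (component tl hd (T.erase e) (hd e)) := by
  have hnj := tree_delete W T hconn hcard he
  have hin' : ∀ f ∈ T.erase e, tl f ∈ W ∧ hd f ∈ W :=
    fun f hf => hin f (Finset.mem_of_mem_erase hf)
  constructor
  · apply Finset.Subset.antisymm
    · exact Finset.union_subset (comp_subset_of_inside hin' (hin e he).1)
        (comp_subset_of_inside hin' (hin e he).2)
    · intro w hw
      have hsp := jr_split (d := e) (hconn (tl e) (hin e he).1 w hw)
      rw [Finset.mem_union, mem_component, mem_component, Finset.coe_erase]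
      rcases hsp with h | ⟨_, h2⟩
      · exact Or.inl h
      · exact h2.imp jr_symm jr_symm
  · rw [Finset.disjoint_left]
    intro j hj1 hj2
    rw [mem_component] at hj1 hj2
    exact hnj (jr_trans hj1 (jr_symm hj2))

lemma comp_union_eq (A B : Finset V) (hAB : Disjoint A B) (D1 D2 : Finset E)
    (h1 : ∀ f ∈ D1, tl f ∈ A ∧ hd f ∈ A) (h2 : ∀ f ∈ D2, tl f ∈ B ∧ hd f ∈ B)
    (hconnB : ∀ a ∈ B, ∀ b ∈ B, joinedRel tl hd ↑D2 a b) {v : V} (hv : v ∈ B) :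
    component tl hd (D1 ∪ D2) v = B := by
  apply Finset.Subset.antisymm
  · intro j hj
    rw [mem_component] at hj
    refine (jr_inv (· ∈ B) ?_ hj).1 hv
    intro f hf
    rw [Finset.coe_union, Set.mem_union] at hf
    rcases hf with hf | hf
    · exact iff_of_false (Finset.disjoint_left.1 hAB (h1 f hf).1)
        (Finset.disjoint_left.1 hAB (h1 f hf).2)
    · exact iff_of_true (h2 f hf).1 (h2 f hf).2
  · intro j hj
    rw [mem_component]
    exact jr_mono (by rw [Finset.coe_union]; exact Set.subset_union_right)
      (hconnB v hv j hj)

lemma comp_insert_eq (A B : Finset V) (hAB : Disjoint A B) (e₀ : E) (p q : V)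
    (hp : p ∈ A) (hq : q ∈ B)
    (hpq : (tl e₀ = p ∧ hd e₀ = q) ∨ (tl e₀ = q ∧ hd e₀ = p))
    (D1 D2 : Finset E) (h1 : ∀ f ∈ D1, tl f ∈ A ∧ hd f ∈ A)
    (h2 : ∀ f ∈ D2, tl f ∈ B ∧ hd f ∈ B)
    (hconnB : ∀ a ∈ B, ∀ b ∈ B, joinedRel tl hd ↑D2 a b) {v : V} (hv : v ∈ A) :
    component tl hd (insert e₀ (D1 ∪ D2)) v =
      if p ∈ component tl hd D1 v then component tl hd D1 v ∪ B
      else component tl hd D1 v := by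
  set A' := component tl hd D1 v with hA'
  have hA'A : A' ⊆ A := comp_subset_of_inside h1 hv
  have hvA' : v ∈ A' := mem_component.2 (jr_refl _ _)
  have hmemcoe : ∀ f, f ∈ (↑(insert e₀ (D1 ∪ D2)) : Set E) ↔ f = e₀ ∨ f ∈ D1 ∨ f ∈ D2 := by
    intro f; simp
  have hiff : ∀ f ∈ D1, (tl f ∈ A' ↔ hd f ∈ A') := by
    intro f hf
    rw [hA', mem_component, mem_component]
    exact ⟨fun h => jr_trans h (jr_edge (Finset.mem_coe.2 hf)),
      fun h => jr_trans h (jr_symm (jr_edge (Finset.mem_coe.2 hf)))⟩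
  split_ifs with hpA
  · apply Finset.Subset.antisymm
    · intro j hj
      rw [mem_component] at hj
      refine (jr_inv (· ∈ A' ∪ B) ?_ hj).1 (Finset.mem_union_left _ hvA')
      intro f hf
      rcases (hmemcoe f).1 hf with rfl | hf | hf
      · rcases hpq with ⟨h1', h2'⟩ | ⟨h1', h2'⟩ <;> rw [h1', h2'] <;>
          exact iff_of_true (by simp [Finset.mem_union, hpA, hq])
            (by simp [Finset.mem_union, hpA, hq])
      · have hnB1 : tl f ∉ B := Finset.disjoint_left.1 hAB (h1 f hf).1
        have hnB2 : hd f ∉ B := Finset.disjoint_left.1 hAB (h1 f hf).2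
        show tl f ∈ A' ∪ B ↔ hd f ∈ A' ∪ B
        rw [Finset.mem_union, Finset.mem_union, or_iff_left hnB1, or_iff_left hnB2]
        exact hiff f hf
      · exact iff_of_true (Finset.mem_union_right _ (h2 f hf).1)
          (Finset.mem_union_right _ (h2 f hf).2)
    · apply Finset.union_subset
      · intro j hj
        rw [mem_component] at hj ⊢
        exact jr_mono (by intro f hf; rw [hmemcoe]; simp [Finset.mem_coe.1 hf]) hj
      · intro j hj
        rw [mem_component]
        have hvp : joinedRel tl hd ↑(insert e₀ (D1 ∪ D2)) v p :=
          jr_mono (by intro f hf; rw [hmemcoe]; right; left; exact hf)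
            (mem_component.1 hpA)
        have hpq' : joinedRel tl hd ↑(insert e₀ (D1 ∪ D2)) p q := by
          have he₀ : e₀ ∈ (↑(insert e₀ (D1 ∪ D2)) : Set E) := by rw [hmemcoe]; left; rfl
          rcases hpq with ⟨h1', h2'⟩ | ⟨h1', h2'⟩
          · rw [← h1', ← h2']; exact jr_edge he₀
          · rw [← h1', ← h2']; exact jr_symm (jr_edge he₀)
        have hqj : joinedRel tl hd ↑(insert e₀ (D1 ∪ D2)) q j :=
          jr_mono (by intro f hf; rw [hmemcoe]; right; right; exact hf)
            (hconnB q hq j hj)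
        exact jr_trans (jr_trans hvp hpq') hqj
  · apply Finset.Subset.antisymm
    · intro j hj
      rw [mem_component] at hj
      refine (jr_inv (· ∈ A') ?_ hj).1 hvA'
      intro f hf
      rcases (hmemcoe f).1 hf with rfl | hf | hf
      · have hqA' : q ∉ A' := fun h => Finset.disjoint_left.1 hAB (hA'A h) hq
        rcases hpq with ⟨h1', h2'⟩ | ⟨h1', h2'⟩ <;> rw [h1', h2'] <;>
          exact iff_of_false (by assumption) (by assumption) <;> try exact iff_of_false hqA' hpA
      · exact hiff f hf
      · exact iff_of_false (fun h => Finset.disjoint_left.1 hAB (hA'A h) (h2 f hf).1)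
          (fun h => Finset.disjoint_left.1 hAB (hA'A h) (h2 f hf).2)
    · intro j hj
      rw [mem_component] at hj ⊢
      exact jr_mono (by intro f hf; rw [hmemcoe]; right; left; exact Finset.mem_coe.1 hf) hj

lemma subtree_struct (W : Finset V) (T : Finset E)
    (hin : ∀ f ∈ T, tl f ∈ W ∧ hd f ∈ W)
    (hconn : ∀ a ∈ W, ∀ b ∈ W, joinedRel tl hd ↑T a b)
    (hcard : T.card + 1 = W.card) {e : E} (he : e ∈ T) :
    ∃ T1 T2 : Finset E,
      T = insert e (T1 ∪ T2) ∧ e ∉ T1 ∪ T2 ∧ Disjoint T1 T2 ∧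
      (∀ f ∈ T1, tl f ∈ component tl hd (T.erase e) (tl e) ∧
        hd f ∈ component tl hd (T.erase e) (tl e)) ∧
      (∀ f ∈ T2, tl f ∈ component tl hd (T.erase e) (hd e) ∧
        hd f ∈ component tl hd (T.erase e) (hd e)) ∧
      (∀ a ∈ component tl hd (T.erase e) (tl e), ∀ b ∈ component tl hd (T.erase e) (tl e),
        joinedRel tl hd ↑T1 a b) ∧
      (∀ a ∈ component tl hd (T.erase e) (hd e), ∀ b ∈ component tl hd (T.erase e) (hd e),
        joinedRel tl hd ↑T2 a b) ∧
      T1.card + 1 = (component tl hd (T.erase e) (tl e)).card ∧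
      T2.card + 1 = (component tl hd (T.erase e) (hd e)).card := by
  set A := component tl hd (T.erase e) (tl e) with hA
  set B := component tl hd (T.erase e) (hd e) with hB
  obtain ⟨hABW, hABd⟩ := tree_cut W T hin hconn hcard he
  set T1 := (T.erase e).filter (fun f => tl f ∈ A) with hT1
  set T2 := (T.erase e).filter (fun f => tl f ∉ A) with hT2
  have hiffA : ∀ f ∈ T.erase e, (tl f ∈ A ↔ hd f ∈ A) := by
    intro f hf
    rw [hA, mem_component, mem_component]
    exact ⟨fun h => jr_trans h (jr_edge (Finset.mem_coe.2 hf)),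
      fun h => jr_trans h (jr_symm (jr_edge (Finset.mem_coe.2 hf)))⟩
  have hiffB : ∀ f ∈ T.erase e, (tl f ∈ B ↔ hd f ∈ B) := by
    intro f hf
    rw [hB, mem_component, mem_component]
    exact ⟨fun h => jr_trans h (jr_edge (Finset.mem_coe.2 hf)),
      fun h => jr_trans h (jr_symm (jr_edge (Finset.mem_coe.2 hf)))⟩
  have hT12 : T1 ∪ T2 = T.erase e := Finset.filter_union_filter_not_eq _ _
  have hT' : T = insert e (T1 ∪ T2) := by rw [hT12, Finset.insert_erase he]
  have heT : e ∉ T1 ∪ T2 := by rw [hT12]; exact Finset.notMem_erase _ _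
  have hd12 : Disjoint T1 T2 := Finset.disjoint_filter_filter_not _ _ _
  have hin1 : ∀ f ∈ T1, tl f ∈ A ∧ hd f ∈ A := by
    intro f hf
    rw [hT1, Finset.mem_filter] at hf
    exact ⟨hf.2, (hiffA f hf.1).1 hf.2⟩
  have hin2 : ∀ f ∈ T2, tl f ∈ B ∧ hd f ∈ B := by
    intro f hf
    rw [hT2, Finset.mem_filter] at hf
    have htlW : tl f ∈ W := (hin f (Finset.mem_of_mem_erase hf.1)).1
    have htlB : tl f ∈ B := by
      have := hABW ▸ htlW
      rw [← hABW, Finset.mem_union] at htlW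
      exact htlW.resolve_left hf.2
    exact ⟨htlB, (hiffB f hf.1).1 htlB⟩
  have hconn1 : ∀ a ∈ A, ∀ b ∈ A, joinedRel tl hd ↑T1 a b := by
    intro a ha b hb
    rw [hA, mem_component] at ha hb
    have hab : joinedRel tl hd ↑(T.erase e) a b := jr_trans (jr_symm ha) hb
    have hsub := jr_filter (↑A : Set V)
      (fun f hf => by
        have := hiffA f (Finset.mem_coe.1 hf)
        simpa using this) hab (by simpa using mem_component.2 ha)
    have hcoe : {f | f ∈ (↑(T.erase e) : Set E) ∧ tl f ∈ (↑A : Set V)} = ↑T1 := by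
      ext f; simp [hT1]; tauto
    rwa [hcoe] at hsub
  have hconn2 : ∀ a ∈ B, ∀ b ∈ B, joinedRel tl hd ↑T2 a b := by
    intro a ha b hb
    rw [hB, mem_component] at ha hb
    have hab : joinedRel tl hd ↑(T.erase e) a b := jr_trans (jr_symm ha) hb
    have haB : a ∈ (↑B : Set V) := by simpa using mem_component.2 ha
    have hsub := jr_filter (↑B : Set V)
      (fun f hf => by
        have := hiffB f (Finset.mem_coe.1 hf)
        simpa using this) hab haB
    have hcoe : {f | f ∈ (↑(T.erase e) : Set E) ∧ tl f ∈ (↑B : Set V)} = ↑T2 := by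
      ext f
      simp only [Set.mem_setOf_eq, Finset.mem_coe, hT2, Finset.mem_filter]
      constructor
      · rintro ⟨hf, hfb⟩
        exact ⟨hf, fun hA' => Finset.disjoint_left.1 hABd hA' hfb⟩
      · rintro ⟨hf, hfna⟩
        refine ⟨hf, ?_⟩
        have : tl f ∈ W := (hin f (Finset.mem_of_mem_erase hf)).1
        rw [← hABW, Finset.mem_union] at this
        exact this.resolve_left hfna
    rwa [hcoe] at hsub
  have hcA := conn_card_le T1 A hconn1
  have hcB := conn_card_le T2 B hconn2
  have hcardAB : A.card + B.card = W.card := by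
    rw [← hABW, Finset.card_union_of_disjoint hABd]
  have hcardT : T1.card + T2.card = T.card - 1 := by
    have h1 : (T1 ∪ T2).card = T1.card + T2.card := Finset.card_union_of_disjoint hd12
    rw [hT12, Finset.card_erase_of_mem he] at h1
    omega
  have hTpos : 0 < T.card := Finset.card_pos.2 ⟨e, he⟩
  exact ⟨T1, T2, hT', heT, hd12, hin1, hin2, hconn1, hconn2, by omega, by omega⟩

lemma sum_update_eq (θ : V → ℝ) (a : V) (c : ℝ) (K : Finset V) :
    ∑ i ∈ K, Function.update θ a c i = (∑ i ∈ K, θ i) + (if a ∈ K then c - θ a else 0) := by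
  by_cases h : a ∈ K
  · rw [Finset.sum_update_of_mem h, if_pos h]
    have h2 : ∑ i ∈ K, θ i = θ a + ∑ i ∈ K \ {a}, θ i :=
      Finset.sum_eq_add_sum_sdiff_singleton_of_mem h θ
    linarith
  · rw [Finset.sum_update_of_notMem h, if_neg h, add_zero]


lemma stable_of_tree {k : Type} [Zero k] (x xs : E → k) :
    ∀ (n : ℕ) (W : Finset V) (θ : V → ℝ) (T : Finset E), W.card = n →
    (∑ i ∈ W, θ i) = 0 →
    (∀ K ⊆ W, K.Nonempty → K ≠ W → ∑ i ∈ K, θ i ≠ 0) →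
    (∀ f ∈ T, tl f ∈ W ∧ hd f ∈ W) →
    (∀ a ∈ W, ∀ b ∈ W, joinedRel tl hd ↑T a b) → (T.card + 1 = W.card) →
    (∀ e ∈ T, ((0 < ∑ j ∈ component tl hd (T.erase e) (hd e), θ j) → x e ≠ 0) ∧
       (¬ (0 < ∑ j ∈ component tl hd (T.erase e) (hd e), θ j) → xs e ≠ 0)) →
    ∀ J ⊆ W, ClosedOn tl hd x xs {f | tl f ∈ W ∧ hd f ∈ W} J → J.Nonempty → J ≠ W →
      0 < ∑ i ∈ J, θ i := by
  intro n
  induction n using Nat.strong_induction_on with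
  | _ n ih =>
  intro W θ T hn hsum hgen hin hconn hcard hcond J hJW hJcl hJne hJW'
  -- W has at least 2 elements
  have hJss : J ⊂ W := Finset.ssubset_iff_subset_ne.2 ⟨hJW, hJW'⟩
  have hW2 : 2 ≤ W.card := by
    have h1 := Finset.card_lt_card hJss
    have h2 := Finset.card_pos.2 hJne
    omega
  have hTne : T.Nonempty := Finset.card_pos.1 (by omega)
  obtain ⟨e, he⟩ := hTne
  obtain ⟨hABW, hABd⟩ := tree_cut W T hin hconn hcard he
  obtain ⟨T1, T2, hT', heT, hd12, hin1, hin2, hconn1, hconn2, hc1, hc2⟩ :=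
    subtree_struct W T hin hconn hcard he
  set A := component tl hd (T.erase e) (tl e) with hA
  set B := component tl hd (T.erase e) (hd e) with hB
  have htlA : tl e ∈ A := mem_component.2 (jr_refl _ _)
  have hhdB : hd e ∈ B := mem_component.2 (jr_refl _ _)
  set sA := ∑ i ∈ A, θ i with hsA
  set sB := ∑ i ∈ B, θ i with hsB
  have hsAB : sA + sB = 0 := by
    rw [hsA, hsB, ← Finset.sum_union hABd, hABW, hsum]
  have hsAd : ∑ i ∈ A, θ i = sA := rfl
  have hsBd : ∑ i ∈ B, θ i = sB := rfl
  have hAW : A ⊆ W := hABW ▸ Finset.subset_union_left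
  have hBW : B ⊆ W := hABW ▸ Finset.subset_union_right
  have hAne : A.Nonempty := ⟨tl e, htlA⟩
  have hBne : B.Nonempty := ⟨hd e, hhdB⟩
  have hAneW : A ≠ W := by
    intro hAw
    have h : hd e ∈ A := by rw [hAw]; exact hBW hhdB
    exact Finset.disjoint_left.1 hABd h hhdB
  have hBneW : B ≠ W := by
    intro hBw
    have h : tl e ∈ B := by rw [hBw]; exact hAW htlA
    exact Finset.disjoint_left.1 hABd htlA h
  have hsA0 : sA ≠ 0 := hgen A hAW hAne hAneW
  have hsB0 : sB ≠ 0 := hgen B hBW hBne hBneW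
  set θ1 := Function.update θ (tl e) (θ (tl e) - sA) with hθ1
  set θ2 := Function.update θ (hd e) (θ (hd e) - sB) with hθ2
  have hsum1 : ∀ K : Finset V, ∑ i ∈ K, θ1 i =
      (∑ i ∈ K, θ i) - (if tl e ∈ K then sA else 0) := by
    intro K
    rw [hθ1, sum_update_eq]
    split_ifs <;> ring
  have hsum2 : ∀ K : Finset V, ∑ i ∈ K, θ2 i =
      (∑ i ∈ K, θ i) - (if hd e ∈ K then sB else 0) := by
    intro K
    rw [hθ2, sum_update_eq]
    split_ifs <;> ring
  -- generic sub-lemma for subsets of A etc.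
  have hgenA : ∀ K ⊆ A, K.Nonempty → K ≠ A → ∑ i ∈ K, θ1 i ≠ 0 := by
    intro K hKA hKne hKA'
    rw [hsum1]
    by_cases htl : tl e ∈ K
    · rw [if_pos htl]
      have hsd : ∑ i ∈ A \ K, θ i + ∑ i ∈ K, θ i = sA := by
        rw [hsA, Finset.sum_sdiff hKA]
      have hne : (A \ K).Nonempty := by
        rw [Finset.sdiff_nonempty]
        intro hAK
        exact hKA' (Finset.Subset.antisymm hKA hAK)
      have hne2 : A \ K ≠ W := by
        intro hEq
        apply hAneW
        apply Finset.Subset.antisymm hAW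
        rw [← hEq]
        exact Finset.sdiff_subset
      have := hgen (A \ K) ((Finset.sdiff_subset).trans hAW) hne hne2
      intro hcontra
      apply this
      linarith
    · rw [if_neg htl, sub_zero]
      have hKW : K ≠ W := by
        intro hEq
        apply hAneW
        apply Finset.Subset.antisymm hAW
        rw [← hEq]
        exact hKA
      exact hgen K (hKA.trans hAW) hKne hKW
  have hgenB : ∀ K ⊆ B, K.Nonempty → K ≠ B → ∑ i ∈ K, θ2 i ≠ 0 := by
    intro K hKB hKne hKB'
    rw [hsum2]
    by_cases htl : hd e ∈ K
    · rw [if_pos htl]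
      have hsd : ∑ i ∈ B \ K, θ i + ∑ i ∈ K, θ i = sB := by
        rw [hsB, Finset.sum_sdiff hKB]
      have hne : (B \ K).Nonempty := by
        rw [Finset.sdiff_nonempty]
        intro hBK
        exact hKB' (Finset.Subset.antisymm hKB hBK)
      have hne2 : B \ K ≠ W := by
        intro hEq
        apply hBneW
        apply Finset.Subset.antisymm hBW
        rw [← hEq]
        exact Finset.sdiff_subset
      have := hgen (B \ K) ((Finset.sdiff_subset).trans hBW) hne hne2
      intro hcontra
      apply this
      linarith
    · rw [if_neg htl, sub_zero]
      have hKW : K ≠ W := by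
        intro hEq
        apply hBneW
        apply Finset.Subset.antisymm hBW
        rw [← hEq]
        exact hKB
      exact hgen K (hKB.trans hBW) hKne hKW
  have hsumA : ∑ i ∈ A, θ1 i = 0 := by rw [hsum1, if_pos htlA]; rw [← hsA]; ring
  have hsumB : ∑ i ∈ B, θ2 i = 0 := by rw [hsum2, if_pos hhdB]; rw [← hsB]; ring
  -- transfer of tree conditions to T1
  have hcond1 : ∀ f ∈ T1, ((0 < ∑ j ∈ component tl hd (T1.erase f) (hd f), θ1 j) →
      x f ≠ 0) ∧ (¬ (0 < ∑ j ∈ component tl hd (T1.erase f) (hd f), θ1 j) → xs f ≠ 0) := by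
    intro f hf
    have hfT : f ∈ T := by
      rw [hT']; exact Finset.mem_insert_of_mem (Finset.mem_union_left _ hf)
    have hfe : f ≠ e := by rintro rfl; exact heT (Finset.mem_union_left _ hf)
    have hfT2 : f ∉ T2 := Finset.disjoint_left.1 hd12 hf
    have herase : T.erase f = insert e ((T1.erase f) ∪ T2) := by
      rw [hT', Finset.erase_insert_of_ne hfe.symm, Finset.erase_union_distrib,
        Finset.erase_eq_of_notMem hfT2]
    have hcomp := comp_insert_eq A B hABd e (tl e) (hd e) htlA hhdB (Or.inl ⟨rfl, rfl⟩)
      (T1.erase f) T2 (fun g hg => hin1 g (Finset.mem_of_mem_erase hg)) hin2 hconn2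
      (hin1 f hf).2
    set A' := component tl hd (T1.erase f) (hd f) with hA'
    have hA'A : A' ⊆ A := comp_subset_of_inside
      (fun g hg => hin1 g (Finset.mem_of_mem_erase hg)) (hin1 f hf).2
    have hsum_eq : ∑ j ∈ component tl hd (T.erase f) (hd f), θ j = ∑ j ∈ A', θ1 j := by
      rw [herase, hcomp, hsum1 A']
      split_ifs with h
      · rw [Finset.sum_union (Finset.disjoint_of_subset_left hA'A hABd)]
        have : ∑ i ∈ B, θ i = sB := rfl
        linarith [hsAB]
      · rw [sub_zero]
    obtain ⟨hca, hcb⟩ := hcond f hfT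
    rw [hsum_eq] at hca hcb
    exact ⟨hca, hcb⟩
  have hcond2 : ∀ f ∈ T2, ((0 < ∑ j ∈ component tl hd (T2.erase f) (hd f), θ2 j) →
      x f ≠ 0) ∧ (¬ (0 < ∑ j ∈ component tl hd (T2.erase f) (hd f), θ2 j) → xs f ≠ 0) := by
    intro f hf
    have hfT : f ∈ T := by
      rw [hT']; exact Finset.mem_insert_of_mem (Finset.mem_union_right _ hf)
    have hfe : f ≠ e := by rintro rfl; exact heT (Finset.mem_union_right _ hf)
    have hfT1 : f ∉ T1 := Finset.disjoint_right.1 hd12 hf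
    have herase : T.erase f = insert e ((T2.erase f) ∪ T1) := by
      rw [hT', Finset.union_comm T1 T2, Finset.erase_insert_of_ne hfe.symm,
        Finset.erase_union_distrib, Finset.erase_eq_of_notMem hfT1]
    have hcomp := comp_insert_eq B A hABd.symm e (hd e) (tl e) hhdB htlA (Or.inr ⟨rfl, rfl⟩)
      (T2.erase f) T1 (fun g hg => hin2 g (Finset.mem_of_mem_erase hg)) hin1 hconn1
      (hin2 f hf).2
    set B' := component tl hd (T2.erase f) (hd f) with hB'
    have hB'B : B' ⊆ B := comp_subset_of_inside
      (fun g hg => hin2 g (Finset.mem_of_mem_erase hg)) (hin2 f hf).2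
    have hsum_eq : ∑ j ∈ component tl hd (T.erase f) (hd f), θ j = ∑ j ∈ B', θ2 j := by
      rw [herase, hcomp, hsum2 B']
      split_ifs with h
      · rw [Finset.sum_union (Finset.disjoint_of_subset_left hB'B hABd.symm)]
        have : ∑ i ∈ A, θ i = sA := rfl
        linarith [hsAB]
      · rw [sub_zero]
    obtain ⟨hca, hcb⟩ := hcond f hfT
    rw [hsum_eq] at hca hcb
    exact ⟨hca, hcb⟩
  -- stability of the two halves via the induction hypothesis
  have hAcard : A.card < n := by
    have h1 : A.card + B.card = W.card := by
      rw [← Finset.card_union_of_disjoint hABd, hABW]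
    have h2 := Finset.card_pos.2 hBne
    omega
  have hBcard : B.card < n := by
    have h1 : A.card + B.card = W.card := by
      rw [← Finset.card_union_of_disjoint hABd, hABW]
    have h2 := Finset.card_pos.2 hAne
    omega
  have STABA := ih A.card hAcard A θ1 T1 rfl hsumA hgenA hin1 hconn1 hc1 hcond1
  have STABB := ih B.card hBcard B θ2 T2 rfl hsumB hgenB hin2 hconn2 hc2 hcond2
  -- decompose J
  set JA := J ∩ A with hJA
  set JB := J ∩ B with hJB
  have hJsplit : ∑ i ∈ J, θ i = ∑ i ∈ JA, θ i + ∑ i ∈ JB, θ i := by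
    rw [hJA, hJB, ← Finset.sum_union
      (Finset.disjoint_of_subset_left Finset.inter_subset_right
        (Finset.disjoint_of_subset_right Finset.inter_subset_right hABd)),
      ← Finset.inter_union_distrib_left, hABW, Finset.inter_eq_left.2 hJW]
  have hJAcl : ClosedOn tl hd x xs {f | tl f ∈ A ∧ hd f ∈ A} JA := by
    intro f hf
    have hfW : tl f ∈ W ∧ hd f ∈ W := ⟨hAW hf.1, hAW hf.2⟩
    refine ⟨fun hx h1 => ?_, fun hx h1 => ?_⟩
    · exact Finset.mem_inter.2 ⟨(hJcl f hfW).1 hx (Finset.mem_inter.1 h1).1, hf.2⟩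
    · exact Finset.mem_inter.2 ⟨(hJcl f hfW).2 hx (Finset.mem_inter.1 h1).1, hf.1⟩
  have hJBcl : ClosedOn tl hd x xs {f | tl f ∈ B ∧ hd f ∈ B} JB := by
    intro f hf
    have hfW : tl f ∈ W ∧ hd f ∈ W := ⟨hBW hf.1, hBW hf.2⟩
    refine ⟨fun hx h1 => ?_, fun hx h1 => ?_⟩
    · exact Finset.mem_inter.2 ⟨(hJcl f hfW).1 hx (Finset.mem_inter.1 h1).1, hf.2⟩
    · exact Finset.mem_inter.2 ⟨(hJcl f hfW).2 hx (Finset.mem_inter.1 h1).1, hf.1⟩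
  -- facts about the edge e
  have heW : tl e ∈ W ∧ hd e ∈ W := hin e he
  have hfact1 : tl e ∈ J → hd e ∉ J → 0 < sA := by
    intro h1 h2
    have hx0 : x e = 0 := by
      by_contra hx
      exact h2 ((hJcl e heW).1 hx h1)
    have hB1 : ¬ (0 < sB) := fun hpos => (hcond e he).1 hpos hx0
    have : sB < 0 := lt_of_le_of_ne (not_lt.1 hB1) hsB0
    linarith
  have hfact2 : hd e ∈ J → tl e ∉ J → 0 < sB := by
    intro h1 h2
    have hxs0 : xs e = 0 := by
      by_contra hxs
      exact h2 ((hJcl e heW).2 hxs h1)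
    by_contra hB1
    exact (hcond e he).2 hB1 hxs0
  -- the three possible statuses of JA and JB
  have htlJA : tl e ∈ JA ↔ tl e ∈ J := by
    rw [hJA, Finset.mem_inter, and_iff_left htlA]
  have hhdJB : hd e ∈ JB ↔ hd e ∈ J := by
    rw [hJB, Finset.mem_inter, and_iff_left hhdB]
  have hStatA : JA = A ∨ JA = ∅ ∨
      (0 < (∑ i ∈ JA, θ i) - (if tl e ∈ J then sA else 0)) := by
    by_cases h1 : JA = A
    · exact Or.inl h1
    by_cases h2 : JA = ∅
    · exact Or.inr (Or.inl h2)
    refine Or.inr (Or.inr ?_)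
    have := STABA JA Finset.inter_subset_right hJAcl
      (Finset.nonempty_of_ne_empty h2) h1
    rw [hsum1 JA] at this
    simpa only [htlJA] using this
  have hStatB : JB = B ∨ JB = ∅ ∨
      (0 < (∑ i ∈ JB, θ i) - (if hd e ∈ J then sB else 0)) := by
    by_cases h1 : JB = B
    · exact Or.inl h1
    by_cases h2 : JB = ∅
    · exact Or.inr (Or.inl h2)
    refine Or.inr (Or.inr ?_)
    have := STABB JB Finset.inter_subset_right hJBcl
      (Finset.nonempty_of_ne_empty h2) h1
    rw [hsum2 JB] at this
    simpa only [hhdJB] using this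
  have hnot_both_full : ¬ (JA = A ∧ JB = B) := by
    rintro ⟨h1, h2⟩
    apply hJW'
    apply Finset.Subset.antisymm hJW
    rw [← hABW]
    apply Finset.union_subset
    · rw [← h1]; exact Finset.inter_subset_left
    · rw [← h2]; exact Finset.inter_subset_left
  have hnot_both_empty : ¬ (JA = ∅ ∧ JB = ∅) := by
    rintro ⟨h1, h2⟩
    obtain ⟨v, hv⟩ := hJne
    have hvW : v ∈ W := hJW hv
    rw [← hABW, Finset.mem_union] at hvW
    rcases hvW with hvA | hvB
    · exact Finset.notMem_empty v (h1 ▸ Finset.mem_inter.2 ⟨hv, hvA⟩)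
    · exact Finset.notMem_empty v (h2 ▸ Finset.mem_inter.2 ⟨hv, hvB⟩)
  rw [hJsplit]
  have htlA_of : JA = A → tl e ∈ J := by
    intro h
    apply htlJA.1
    rw [h]
    exact htlA
  have hhdB_of : JB = B → hd e ∈ J := by
    intro h
    apply hhdJB.1
    rw [h]
    exact hhdB
  have htlA_not : JA = ∅ → tl e ∉ J := by
    intro h hJ
    exact Finset.notMem_empty (tl e) (h ▸ htlJA.2 hJ)
  have hhdB_not : JB = ∅ → hd e ∉ J := by
    intro h hJ
    exact Finset.notMem_empty (hd e) (h ▸ hhdJB.2 hJ)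
  rcases hStatA with h1 | h1 | h1 <;> rcases hStatB with h2 | h2 | h2
  · exact absurd ⟨h1, h2⟩ hnot_both_full
  · -- JA = A, JB = ∅
    have hpos := hfact1 (htlA_of h1) (hhdB_not h2)
    rw [h1, h2]
    simp only [Finset.sum_empty, add_zero]
    linarith [hsAd]
  · -- JA = A, JB proper
    have htl : tl e ∈ J := htlA_of h1
    rw [h1]
    by_cases hhd : hd e ∈ J
    · rw [if_pos hhd] at h2
      linarith [hsAd]
    · have hpos := hfact1 htl hhd
      rw [if_neg hhd] at h2
      linarith [hsAd]
  · -- JA = ∅, JB = B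
    have hpos := hfact2 (hhdB_of h2) (htlA_not h1)
    rw [h1, h2]
    simp only [Finset.sum_empty, zero_add]
    linarith [hsBd]
  · exact absurd ⟨h1, h2⟩ hnot_both_empty
  · -- JA = ∅, JB proper
    have htl : tl e ∉ J := htlA_not h1
    rw [h1]
    simp only [Finset.sum_empty, zero_add]
    by_cases hhd : hd e ∈ J
    · have hpos := hfact2 hhd htl
      rw [if_pos hhd] at h2
      linarith
    · rw [if_neg hhd] at h2
      linarith
  · -- JA proper, JB = B
    have hhd : hd e ∈ J := hhdB_of h2
    rw [h2]
    by_cases htl : tl e ∈ J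
    · rw [if_pos htl] at h1
      linarith [hsBd]
    · have hpos := hfact2 hhd htl
      rw [if_neg htl] at h1
      linarith [hsBd]
  · -- JA proper, JB = ∅
    have hhd : hd e ∉ J := hhdB_not h2
    rw [h2]
    simp only [Finset.sum_empty, add_zero]
    by_cases htl : tl e ∈ J
    · have hpos := hfact1 htl hhd
      rw [if_pos htl] at h1
      linarith
    · rw [if_neg htl] at h1
      linarith
  · -- both proper
    by_cases htl : tl e ∈ J <;> by_cases hhd : hd e ∈ J
    · rw [if_pos htl] at h1
      rw [if_pos hhd] at h2
      linarith
    · have hpos := hfact1 htl hhd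
      rw [if_pos htl] at h1
      rw [if_neg hhd] at h2
      linarith
    · have hpos := hfact2 hhd htl
      rw [if_neg htl] at h1
      rw [if_pos hhd] at h2
      linarith
    · rw [if_neg htl] at h1
      rw [if_neg hhd] at h2
      linarith

lemma contract_step {k : Type} [Zero k] (x xs : E → k) (W : Finset V) (S : Finset E)
    (θ : V → ℝ)
    (hsum : (∑ i ∈ W, θ i) = 0)
    (hgen : ∀ K ⊆ W, K.Nonempty → K ≠ W → ∑ i ∈ K, θ i ≠ 0)
    (hin : ∀ f ∈ S, tl f ∈ W ∧ hd f ∈ W)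
    (hstab : ∀ J ⊆ W, ClosedOn tl hd x xs ↑S J → J.Nonempty → J ≠ W → 0 < ∑ i ∈ J, θ i)
    (e : E) (he : e ∈ S) (a b : V)
    (harrow : (tl e = a ∧ hd e = b ∧ x e ≠ 0) ∨ (tl e = b ∧ hd e = a ∧ xs e ≠ 0))
    (hall : ∀ J, (J ⊆ W ∧ ClosedOn tl hd x xs ↑(S.erase e) J ∧ J.Nonempty ∧ J ≠ W ∧
      ∑ i ∈ J, θ i ≤ 0) → a ∈ J ∧ b ∉ J)
    (J₁ : Finset V)
    (hJ₁ : J₁ ⊆ W ∧ ClosedOn tl hd x xs ↑(S.erase e) J₁ ∧ J₁.Nonempty ∧ J₁ ≠ W ∧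
      ∑ i ∈ J₁, θ i ≤ 0)
    (hmin : ∀ J, (J ⊆ W ∧ ClosedOn tl hd x xs ↑(S.erase e) J ∧ J.Nonempty ∧ J ≠ W ∧
      ∑ i ∈ J, θ i ≤ 0) → ∑ i ∈ J₁, θ i ≤ ∑ i ∈ J, θ i)
    (IH : ∀ (W' : Finset V) (S' : Finset E) (θ' : V → ℝ),
      W'.card + S'.card < W.card + S.card → W'.Nonempty → (∑ i ∈ W', θ' i) = 0 →
      (∀ K ⊆ W', K.Nonempty → K ≠ W' → ∑ i ∈ K, θ' i ≠ 0) →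
      (∀ f ∈ S', tl f ∈ W' ∧ hd f ∈ W') →
      (∀ J ⊆ W', ClosedOn tl hd x xs ↑S' J → J.Nonempty → J ≠ W' → 0 < ∑ i ∈ J, θ' i) →
      ∃ T, T ⊆ S' ∧ (∀ p ∈ W', ∀ q ∈ W', joinedRel tl hd ↑T p q) ∧ T.card + 1 = W'.card ∧
        ∀ f ∈ T, ((0 < ∑ j ∈ component tl hd (T.erase f) (hd f), θ' j) → x f ≠ 0) ∧
          (¬ (0 < ∑ j ∈ component tl hd (T.erase f) (hd f), θ' j) → xs f ≠ 0)) :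
    ∃ T, T ⊆ S ∧ (∀ p ∈ W, ∀ q ∈ W, joinedRel tl hd ↑T p q) ∧ T.card + 1 = W.card ∧
      ∀ f ∈ T, ((0 < ∑ j ∈ component tl hd (T.erase f) (hd f), θ j) → x f ≠ 0) ∧
        (¬ (0 < ∑ j ∈ component tl hd (T.erase f) (hd f), θ j) → xs f ≠ 0) := by
  obtain ⟨hJ₁W, hJ₁cl, hJ₁ne, hJ₁neW, hJ₁sum⟩ := hJ₁
  set sJ := ∑ i ∈ J₁, θ i with hsJ
  have hsJneg : sJ < 0 := lt_of_le_of_ne hJ₁sum (hgen J₁ hJ₁W hJ₁ne hJ₁neW)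
  obtain ⟨haJ, hbJ⟩ := hall J₁ ⟨hJ₁W, hJ₁cl, hJ₁ne, hJ₁neW, hJ₁sum⟩
  have haW : a ∈ W := hJ₁W haJ
  have hbW : b ∈ W := by
    rcases harrow with ⟨h1, h2, _⟩ | ⟨h1, h2, _⟩
    · rw [← h2]; exact (hin e he).2
    · rw [← h1]; exact (hin e he).1
  set W2 := W \ J₁ with hW2
  have hbW2 : b ∈ W2 := Finset.mem_sdiff.2 ⟨hbW, hbJ⟩
  have hdJW2 : Disjoint J₁ W2 := Finset.disjoint_sdiff
  have hWsplit : J₁ ∪ W2 = W := by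
    rw [hW2]
    exact Finset.union_sdiff_of_subset hJ₁W
  have hW2sum : ∑ i ∈ W2, θ i = -sJ := by
    have h := Finset.sum_sdiff_eq_sub hJ₁W (f := θ)
    rw [hW2, h, hsum]
    rw [hsJ]
    ring
  set S1 := S.filter (fun f => tl f ∈ J₁ ∧ hd f ∈ J₁) with hS1
  set S2 := S.filter (fun f => tl f ∈ W2 ∧ hd f ∈ W2) with hS2
  set θ1 := Function.update θ a (θ a - sJ) with hθ1
  set θ2 := Function.update θ b (θ b + sJ) with hθ2
  have hsum1 : ∀ K : Finset V, ∑ i ∈ K, θ1 i =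
      (∑ i ∈ K, θ i) - (if a ∈ K then sJ else 0) := by
    intro K
    rw [hθ1, sum_update_eq]
    split_ifs <;> ring
  have hsum2 : ∀ K : Finset V, ∑ i ∈ K, θ2 i =
      (∑ i ∈ K, θ i) + (if b ∈ K then sJ else 0) := by
    intro K
    rw [hθ2, sum_update_eq]
    split_ifs <;> ring
  have hin1 : ∀ f ∈ S1, tl f ∈ J₁ ∧ hd f ∈ J₁ := fun f hf => (Finset.mem_filter.1 hf).2
  have hin2 : ∀ f ∈ S2, tl f ∈ W2 ∧ hd f ∈ W2 := fun f hf => (Finset.mem_filter.1 hf).2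
  have hsubJ_neW : ∀ K ⊆ J₁, K ≠ W := by
    intro K hK hEq
    apply hJ₁neW
    apply Finset.Subset.antisymm hJ₁W
    rw [← hEq]
    exact hK
  have hW2neW : W2 ≠ W := by
    intro hEq
    have h : a ∈ W2 := by rw [hEq]; exact haW
    exact (Finset.mem_sdiff.1 h).2 haJ
  have hsubW2_neW : ∀ K ⊆ W2, K ≠ W := by
    intro K hK hEq
    apply hW2neW
    apply Finset.Subset.antisymm
    · rw [hW2]; exact Finset.sdiff_subset
    · rw [← hEq]; exact hK
  have hKJneW : ∀ K ⊆ W2, K ≠ W2 → K ∪ J₁ ≠ W := by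
    intro K hK hKW2 hEq
    obtain ⟨z, hz1, hz2⟩ := Finset.exists_of_ssubset
      (Finset.ssubset_iff_subset_ne.2 ⟨hK, hKW2⟩)
    have hzW : z ∈ W := Finset.sdiff_subset hz1
    have hz : z ∈ K ∪ J₁ := by rw [hEq]; exact hzW
    rcases Finset.mem_union.1 hz with h | h
    · exact hz2 h
    · exact (Finset.mem_sdiff.1 hz1).2 h
  have hgen1 : ∀ K ⊆ J₁, K.Nonempty → K ≠ J₁ → ∑ i ∈ K, θ1 i ≠ 0 := by
    intro K hK hKne hKJ
    rw [hsum1]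
    by_cases haK : a ∈ K
    · rw [if_pos haK]
      have hdiff : ∑ i ∈ J₁ \ K, θ i + ∑ i ∈ K, θ i = sJ := by
        rw [hsJ, Finset.sum_sdiff hK]
      have hdne : (J₁ \ K).Nonempty := by
        rw [Finset.sdiff_nonempty]
        intro hJK
        exact hKJ (Finset.Subset.antisymm hK hJK)
      have hg := hgen (J₁ \ K) (Finset.sdiff_subset.trans hJ₁W) hdne
        (hsubJ_neW _ Finset.sdiff_subset)
      intro hc
      exact hg (by linarith)
    · rw [if_neg haK, sub_zero]
      exact hgen K (hK.trans hJ₁W) hKne (hsubJ_neW K hK)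
  have hgen2 : ∀ K ⊆ W2, K.Nonempty → K ≠ W2 → ∑ i ∈ K, θ2 i ≠ 0 := by
    intro K hK hKne hKW2
    rw [hsum2]
    by_cases hbK : b ∈ K
    · rw [if_pos hbK]
      have hdisj : Disjoint K J₁ := Finset.disjoint_of_subset_left hK hdJW2.symm
      have hu : ∑ i ∈ K ∪ J₁, θ i = ∑ i ∈ K, θ i + sJ := by
        rw [Finset.sum_union hdisj, hsJ]
      have hne : (K ∪ J₁).Nonempty := ⟨b, Finset.mem_union_left _ hbK⟩
      have hg := hgen (K ∪ J₁) (Finset.union_subset (hK.trans Finset.sdiff_subset) hJ₁W)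
        hne (hKJneW K hK hKW2)
      intro hc
      exact hg (by linarith)
    · rw [if_neg hbK, add_zero]
      exact hgen K (hK.trans Finset.sdiff_subset) hKne (hsubW2_neW K hK)
  have hsumJ1 : ∑ i ∈ J₁, θ1 i = 0 := by
    rw [hsum1, if_pos haJ, ← hsJ]
    ring
  have hsumW2 : ∑ i ∈ W2, θ2 i = 0 := by
    rw [hsum2, if_pos hbW2, hW2sum]
    ring
  have hstab1 : ∀ K ⊆ J₁, ClosedOn tl hd x xs ↑S1 K → K.Nonempty → K ≠ J₁ →
      0 < ∑ i ∈ K, θ1 i := by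
    intro K hK hKcl hKne hKJ
    have hclSe : ClosedOn tl hd x xs ↑(S.erase e) K := by
      intro f hf
      have hfS : f ∈ S := Finset.mem_of_mem_erase (Finset.mem_coe.1 hf)
      constructor
      · intro hx htl
        have htlJ : tl f ∈ J₁ := hK htl
        have hhdJ : hd f ∈ J₁ := (hJ₁cl f hf).1 hx htlJ
        have hfS1 : f ∈ S1 := Finset.mem_filter.2 ⟨hfS, htlJ, hhdJ⟩
        exact (hKcl f (Finset.mem_coe.2 hfS1)).1 hx htl
      · intro hxs hhd
        have hhdJ : hd f ∈ J₁ := hK hhd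
        have htlJ : tl f ∈ J₁ := (hJ₁cl f hf).2 hxs hhdJ
        have hfS1 : f ∈ S1 := Finset.mem_filter.2 ⟨hfS, htlJ, hhdJ⟩
        exact (hKcl f (Finset.mem_coe.2 hfS1)).2 hxs hhd
    by_cases haK : a ∈ K
    · by_cases hKpos : 0 < ∑ i ∈ K, θ i
      · rw [hsum1, if_pos haK]
        linarith
      · have hminK := hmin K ⟨hK.trans hJ₁W, hclSe, hKne, hsubJ_neW K hK, not_lt.1 hKpos⟩
        have hdne : (J₁ \ K).Nonempty := by
          rw [Finset.sdiff_nonempty]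
          intro hJK
          exact hKJ (Finset.Subset.antisymm hK hJK)
        have hg := hgen (J₁ \ K) (Finset.sdiff_subset.trans hJ₁W) hdne
          (hsubJ_neW _ Finset.sdiff_subset)
        have hdiff : ∑ i ∈ J₁ \ K, θ i + ∑ i ∈ K, θ i = sJ := by
          rw [hsJ, Finset.sum_sdiff hK]
        rw [hsum1, if_pos haK]
        have hne0 : ∑ i ∈ K, θ i - sJ ≠ 0 := fun hc => hg (by linarith)
        have hge0 : 0 ≤ ∑ i ∈ K, θ i - sJ := by linarith
        exact lt_of_le_of_ne hge0 (Ne.symm hne0)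
    · have hclS : ClosedOn tl hd x xs ↑S K := by
        intro f hf
        by_cases hfe : f = e
        · subst hfe
          rcases harrow with ⟨h1, h2, _⟩ | ⟨h1, h2, _⟩
          · constructor
            · intro _ htl; rw [h1] at htl; exact absurd htl haK
            · intro _ hhd; rw [h2] at hhd; exact absurd (hK hhd) hbJ
          · constructor
            · intro _ htl; rw [h1] at htl; exact absurd (hK htl) hbJ
            · intro _ hhd; rw [h2] at hhd; exact absurd hhd haK
        · exact hclSe f (Finset.mem_coe.2 (Finset.mem_erase.2 ⟨hfe, Finset.mem_coe.1 hf⟩))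
      have hp := hstab K (hK.trans hJ₁W) hclS hKne (hsubJ_neW K hK)
      rw [hsum1, if_neg haK, sub_zero]
      exact hp
  have hstab2 : ∀ K ⊆ W2, ClosedOn tl hd x xs ↑S2 K → K.Nonempty → K ≠ W2 →
      0 < ∑ i ∈ K, θ2 i := by
    intro K hK hKcl hKne hKW2
    have hdisjKJ : Disjoint K J₁ := Finset.disjoint_of_subset_left hK hdJW2.symm
    have hLsum : ∑ i ∈ K ∪ J₁, θ i = ∑ i ∈ K, θ i + sJ := by
      rw [Finset.sum_union hdisjKJ, hsJ]
    have hclL : ClosedOn tl hd x xs ↑(S.erase e) (K ∪ J₁) := by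
      intro f hf
      have hfS : f ∈ S := Finset.mem_of_mem_erase (Finset.mem_coe.1 hf)
      constructor
      · intro hx htl
        rcases Finset.mem_union.1 htl with htlK | htlJ
        · by_cases hhdJ : hd f ∈ J₁
          · exact Finset.mem_union_right _ hhdJ
          · have hhdW2 : hd f ∈ W2 := Finset.mem_sdiff.2 ⟨(hin f hfS).2, hhdJ⟩
            have hfS2 : f ∈ S2 := Finset.mem_filter.2 ⟨hfS, hK htlK, hhdW2⟩
            exact Finset.mem_union_left _ ((hKcl f (Finset.mem_coe.2 hfS2)).1 hx htlK)
        · exact Finset.mem_union_right _ ((hJ₁cl f hf).1 hx htlJ)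
      · intro hxs hhd
        rcases Finset.mem_union.1 hhd with hhdK | hhdJ
        · by_cases htlJ : tl f ∈ J₁
          · exact Finset.mem_union_right _ htlJ
          · have htlW2 : tl f ∈ W2 := Finset.mem_sdiff.2 ⟨(hin f hfS).1, htlJ⟩
            have hfS2 : f ∈ S2 := Finset.mem_filter.2 ⟨hfS, htlW2, hK hhdK⟩
            exact Finset.mem_union_left _ ((hKcl f (Finset.mem_coe.2 hfS2)).2 hxs hhdK)
        · exact Finset.mem_union_right _ ((hJ₁cl f hf).2 hxs hhdJ)
    have hLW : K ∪ J₁ ⊆ W := Finset.union_subset (hK.trans Finset.sdiff_subset) hJ₁W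
    have hLne : (K ∪ J₁).Nonempty := ⟨a, Finset.mem_union_right _ haJ⟩
    have hLneW : K ∪ J₁ ≠ W := hKJneW K hK hKW2
    by_cases hbK : b ∈ K
    · have hLpos : 0 < ∑ i ∈ K ∪ J₁, θ i := by
        by_contra hc
        exact (hall _ ⟨hLW, hclL, hLne, hLneW, not_lt.1 hc⟩).2 (Finset.mem_union_left _ hbK)
      rw [hsum2, if_pos hbK]
      linarith
    · rw [hsum2, if_neg hbK, add_zero]
      by_cases hL : ∑ i ∈ K ∪ J₁, θ i ≤ 0
      · have hminL := hmin _ ⟨hLW, hclL, hLne, hLneW, hL⟩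
        have h0 : (0:ℝ) ≤ ∑ i ∈ K, θ i := by linarith
        have hne0 := hgen K (hK.trans Finset.sdiff_subset) hKne (hsubW2_neW K hK)
        exact lt_of_le_of_ne h0 (Ne.symm hne0)
      · push_neg at hL
        linarith
  have hJ₁ltW : J₁.card < W.card :=
    Finset.card_lt_card (Finset.ssubset_iff_subset_ne.2 ⟨hJ₁W, hJ₁neW⟩)
  have hW2lt : W2.card < W.card := by
    rw [hW2, Finset.card_sdiff_of_subset hJ₁W]
    have h1 := Finset.card_pos.2 hJ₁ne
    have h2 := Finset.card_le_card hJ₁W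
    omega
  have hS1le : S1.card ≤ S.card := Finset.card_le_card (Finset.filter_subset _ _)
  have hS2le : S2.card ≤ S.card := Finset.card_le_card (Finset.filter_subset _ _)
  obtain ⟨T1, hT1S, hconn1, hc1, hcond1⟩ :=
    IH J₁ S1 θ1 (by omega) ⟨a, haJ⟩ hsumJ1 hgen1 hin1 hstab1
  obtain ⟨T2, hT2S, hconn2, hc2, hcond2⟩ :=
    IH W2 S2 θ2 (by omega) ⟨b, hbW2⟩ hsumW2 hgen2 hin2 hstab2
  have hT1in : ∀ f ∈ T1, tl f ∈ J₁ ∧ hd f ∈ J₁ := fun f hf => hin1 f (hT1S hf)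
  have hT2in : ∀ f ∈ T2, tl f ∈ W2 ∧ hd f ∈ W2 := fun f hf => hin2 f (hT2S hf)
  have heT12 : e ∉ T1 ∪ T2 := by
    intro hmem
    rcases Finset.mem_union.1 hmem with h | h
    · rcases harrow with ⟨h1, h2, _⟩ | ⟨h1, h2, _⟩
      · exact hbJ (h2 ▸ (hT1in e h).2)
      · exact hbJ (h1 ▸ (hT1in e h).1)
    · rcases harrow with ⟨h1, h2, _⟩ | ⟨h1, h2, _⟩
      · exact (Finset.mem_sdiff.1 (h1 ▸ (hT2in e h).1)).2 haJ
      · exact (Finset.mem_sdiff.1 (h2 ▸ (hT2in e h).2)).2 haJ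
  have hd12T : Disjoint T1 T2 := by
    rw [Finset.disjoint_left]
    intro f h1 h2
    exact (Finset.mem_sdiff.1 (hT2in f h2).1).2 (hT1in f h1).1
  have hTS : insert e (T1 ∪ T2) ⊆ S :=
    Finset.insert_subset he (Finset.union_subset
      (hT1S.trans (Finset.filter_subset _ _)) (hT2S.trans (Finset.filter_subset _ _)))
  have heinT : e ∈ (↑(insert e (T1 ∪ T2)) : Set E) := by simp
  have heab : joinedRel tl hd ↑(insert e (T1 ∪ T2)) a b := by
    rcases harrow with ⟨h1, h2, _⟩ | ⟨h1, h2, _⟩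
    · rw [← h1, ← h2]; exact jr_edge heinT
    · rw [← h1, ← h2]; exact jr_symm (jr_edge heinT)
  have hT1sub : (↑T1 : Set E) ⊆ ↑(insert e (T1 ∪ T2)) := by
    intro f hf; simp only [Finset.coe_insert, Set.mem_insert_iff, Finset.coe_union,
      Set.mem_union]
    exact Or.inr (Or.inl hf)
  have hT2sub : (↑T2 : Set E) ⊆ ↑(insert e (T1 ∪ T2)) := by
    intro f hf; simp only [Finset.coe_insert, Set.mem_insert_iff, Finset.coe_union,
      Set.mem_union]
    exact Or.inr (Or.inr hf)
  have hjoina : ∀ p ∈ W, joinedRel tl hd ↑(insert e (T1 ∪ T2)) p a := by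
    intro p hp
    rw [← hWsplit, Finset.mem_union] at hp
    rcases hp with h | h
    · exact jr_mono hT1sub (hconn1 p h a haJ)
    · exact jr_trans (jr_mono hT2sub (hconn2 p h b hbW2)) (jr_symm heab)
  have hconnT : ∀ p ∈ W, ∀ q ∈ W, joinedRel tl hd ↑(insert e (T1 ∪ T2)) p q :=
    fun p hp q hq => jr_trans (hjoina p hp) (jr_symm (hjoina q hq))
  have hcardW : J₁.card + W2.card = W.card := by
    rw [← Finset.card_union_of_disjoint hdJW2, hWsplit]
  have hcardT : (insert e (T1 ∪ T2)).card + 1 = W.card := by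
    rw [Finset.card_insert_of_notMem heT12, Finset.card_union_of_disjoint hd12T]
    omega
  refine ⟨insert e (T1 ∪ T2), hTS, hconnT, hcardT, ?_⟩
  intro f hf
  rcases Finset.mem_insert.1 hf with rfl | hf12
  · -- the new edge e
    have herase : (insert f (T1 ∪ T2)).erase f = T1 ∪ T2 := Finset.erase_insert heT12
    rcases harrow with ⟨h1, h2, hx⟩ | ⟨h1, h2, hxs⟩
    · have hpos : 0 < ∑ j ∈ component tl hd ((insert f (T1 ∪ T2)).erase f) (hd f), θ j := by
        rw [herase, h2, comp_union_eq J₁ W2 hdJW2 T1 T2 hT1in hT2in hconn2 hbW2, hW2sum]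
        linarith
      exact ⟨fun _ => hx, fun hcon => absurd hpos hcon⟩
    · have hneg : ∑ j ∈ component tl hd ((insert f (T1 ∪ T2)).erase f) (hd f), θ j = sJ := by
        rw [herase, h2, Finset.union_comm T1 T2,
          comp_union_eq W2 J₁ hdJW2.symm T2 T1 hT2in hT1in hconn1 haJ, ← hsJ]
      constructor
      · intro hcon
        rw [hneg] at hcon
        linarith
      · intro _
        exact hxs
  rcases Finset.mem_union.1 hf12 with hf' | hf'
  · -- f in T1
    have hfe : f ≠ e := by rintro rfl; exact heT12 hf12
    have hfT2 : f ∉ T2 := Finset.disjoint_left.1 hd12T hf'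
    have herase : (insert e (T1 ∪ T2)).erase f = insert e ((T1.erase f) ∪ T2) := by
      rw [Finset.erase_insert_of_ne hfe.symm, Finset.erase_union_distrib,
        Finset.erase_eq_of_notMem hfT2]
    have harrow' : (tl e = a ∧ hd e = b) ∨ (tl e = b ∧ hd e = a) :=
      harrow.imp (fun h => ⟨h.1, h.2.1⟩) (fun h => ⟨h.1, h.2.1⟩)
    have hcomp := comp_insert_eq J₁ W2 hdJW2 e a b haJ hbW2 harrow'
      (T1.erase f) T2 (fun g hg => hT1in g (Finset.mem_of_mem_erase hg)) hT2in hconn2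
      (hT1in f hf').2
    set A' := component tl hd (T1.erase f) (hd f) with hA'
    have hA'J : A' ⊆ J₁ := comp_subset_of_inside
      (fun g hg => hT1in g (Finset.mem_of_mem_erase hg)) (hT1in f hf').2
    have hsum_eq : ∑ j ∈ component tl hd ((insert e (T1 ∪ T2)).erase f) (hd f), θ j =
        ∑ j ∈ A', θ1 j := by
      rw [herase, hcomp, hsum1 A']
      split_ifs with hmem
      · rw [Finset.sum_union (Finset.disjoint_of_subset_left hA'J hdJW2)]
        linarith [hW2sum]
      · rw [sub_zero]
    obtain ⟨hca, hcb⟩ := hcond1 f hf'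
    rw [← hsum_eq] at hca hcb
    exact ⟨hca, hcb⟩
  · -- f in T2
    have hfe : f ≠ e := by rintro rfl; exact heT12 hf12
    have hfT1 : f ∉ T1 := Finset.disjoint_right.1 hd12T hf'
    have herase : (insert e (T1 ∪ T2)).erase f = insert e ((T2.erase f) ∪ T1) := by
      rw [Finset.union_comm T1 T2, Finset.erase_insert_of_ne hfe.symm,
        Finset.erase_union_distrib, Finset.erase_eq_of_notMem hfT1]
    have harrow'' : (tl e = b ∧ hd e = a) ∨ (tl e = a ∧ hd e = b) :=
      harrow.elim (fun h => Or.inr ⟨h.1, h.2.1⟩) (fun h => Or.inl ⟨h.1, h.2.1⟩)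
    have hcomp := comp_insert_eq W2 J₁ hdJW2.symm e b a hbW2 haJ harrow''
      (T2.erase f) T1 (fun g hg => hT2in g (Finset.mem_of_mem_erase hg)) hT1in hconn1
      (hT2in f hf').2
    set B' := component tl hd (T2.erase f) (hd f) with hB'
    have hB'W2 : B' ⊆ W2 := comp_subset_of_inside
      (fun g hg => hT2in g (Finset.mem_of_mem_erase hg)) (hT2in f hf').2
    have hsum_eq : ∑ j ∈ component tl hd ((insert e (T1 ∪ T2)).erase f) (hd f), θ j =
        ∑ j ∈ B', θ2 j := by
      rw [herase, hcomp, hsum2 B']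
      split_ifs with hmem
      · rw [Finset.sum_union (Finset.disjoint_of_subset_left hB'W2 hdJW2.symm)]
      · rw [add_zero]
    obtain ⟨hca, hcb⟩ := hcond2 f hf'
    rw [← hsum_eq] at hca hcb
    exact ⟨hca, hcb⟩

lemma tree_of_stable {k : Type} [Zero k] (x xs : E → k) :
    ∀ (n : ℕ) (W : Finset V) (S : Finset E) (θ : V → ℝ), W.card + S.card = n →
    W.Nonempty → (∑ i ∈ W, θ i) = 0 →
    (∀ K ⊆ W, K.Nonempty → K ≠ W → ∑ i ∈ K, θ i ≠ 0) →
    (∀ f ∈ S, tl f ∈ W ∧ hd f ∈ W) →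
    (∀ J ⊆ W, ClosedOn tl hd x xs ↑S J → J.Nonempty → J ≠ W → 0 < ∑ i ∈ J, θ i) →
    ∃ T, T ⊆ S ∧ (∀ p ∈ W, ∀ q ∈ W, joinedRel tl hd ↑T p q) ∧ T.card + 1 = W.card ∧
      ∀ f ∈ T, ((0 < ∑ j ∈ component tl hd (T.erase f) (hd f), θ j) → x f ≠ 0) ∧
        (¬ (0 < ∑ j ∈ component tl hd (T.erase f) (hd f), θ j) → xs f ≠ 0) := by
  intro n
  induction n using Nat.strong_induction_on with
  | _ n ih =>
  intro W S θ hn hWne hsum hgen hin hstab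
  by_cases hW1 : W.card = 1
  · refine ⟨∅, Finset.empty_subset _, ?_, by rw [Finset.card_empty]; omega, ?_⟩
    · intro p hp q hq
      have hpq : p = q := Finset.card_le_one.1 (le_of_eq hW1) p hp q hq
      rw [hpq]
      exact jr_refl _ _
    · intro f hf
      exact absurd hf (Finset.notMem_empty f)
  have hW2 : 2 ≤ W.card := by
    have := Finset.card_pos.2 hWne
    omega
  by_cases hdel : ∃ e ∈ S, ∀ J ⊆ W, ClosedOn tl hd x xs ↑(S.erase e) J → J.Nonempty →
      J ≠ W → 0 < ∑ i ∈ J, θ i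
  · obtain ⟨e, he, hstab'⟩ := hdel
    have hcards : W.card + (S.erase e).card < n := by
      rw [Finset.card_erase_of_mem he]
      have := Finset.card_pos.2 ⟨e, he⟩
      omega
    obtain ⟨T, hTS, hconn, hcard, hcond⟩ := ih _ hcards W (S.erase e) θ rfl hWne hsum hgen
      (fun f hf => hin f (Finset.mem_of_mem_erase hf)) hstab'
    exact ⟨T, hTS.trans (Finset.erase_subset _ _), hconn, hcard, hcond⟩
  push_neg at hdel
  have hSne : S.Nonempty := by
    rcases S.eq_empty_or_nonempty with rfl | h
    · exfalso
      obtain ⟨v, hv⟩ := hWne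
      have hvW : ({v} : Finset V) ⊆ W := Finset.singleton_subset_iff.2 hv
      have hcl : ∀ (J : Finset V), ClosedOn tl hd x xs (↑(∅ : Finset E)) J := by
        intro J f hf
        exact absurd hf (by simp)
      have hvne : ({v} : Finset V) ≠ W := by
        intro hEq
        rw [← hEq, Finset.card_singleton] at hW2
        omega
      have h1 := hstab {v} hvW (hcl _) (Finset.singleton_nonempty v) hvne
      have hWvne : (W \ {v}).Nonempty := by
        rw [← Finset.card_pos, Finset.card_sdiff_of_subset hvW, Finset.card_singleton]
        omega
      have hWvneW : W \ {v} ≠ W := by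
        intro hEq
        have hmem : v ∈ W \ {v} := by rw [hEq]; exact hv
        simp at hmem
      have h2 := hstab (W \ {v}) Finset.sdiff_subset (hcl _) hWvne hWvneW
      rw [Finset.sum_singleton] at h1
      rw [Finset.sum_sdiff_eq_sub hvW, hsum, Finset.sum_singleton] at h2
      linarith
    · exact h
  obtain ⟨e, he⟩ := hSne
  obtain ⟨J₀, hJ₀W, hJ₀cl, hJ₀ne, hJ₀neW, hJ₀sum'⟩ := hdel e he
  have hJ₀ : J₀ ⊆ W ∧ ClosedOn tl hd x xs ↑(S.erase e) J₀ ∧ J₀.Nonempty ∧ J₀ ≠ W ∧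
      ∑ i ∈ J₀, θ i ≤ 0 := ⟨hJ₀W, hJ₀cl, hJ₀ne, hJ₀neW, hJ₀sum'⟩
  have hbreak : ∀ J, (J ⊆ W ∧ ClosedOn tl hd x xs ↑(S.erase e) J ∧ J.Nonempty ∧ J ≠ W ∧
      ∑ i ∈ J, θ i ≤ 0) →
      (x e ≠ 0 ∧ tl e ∈ J ∧ hd e ∉ J) ∨ (xs e ≠ 0 ∧ hd e ∈ J ∧ tl e ∉ J) := by
    rintro J ⟨hJW', hJcl, hJne, hJneW, hJsum⟩
    have hnotcl : ¬ ClosedOn tl hd x xs ↑S J := by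
      intro hcl
      exact absurd (hstab J hJW' hcl hJne hJneW) (not_lt.2 hJsum)
    rw [ClosedOn] at hnotcl
    push_neg at hnotcl
    obtain ⟨f, hfS, hviol⟩ := hnotcl
    have hfe : f = e := by
      by_contra hfe
      have hfSe : f ∈ (↑(S.erase e) : Set E) :=
        Finset.mem_coe.2 (Finset.mem_erase.2 ⟨hfe, Finset.mem_coe.1 hfS⟩)
      obtain ⟨hxs', hhd', htl'⟩ := hviol (hJcl f hfSe).1
      exact htl' ((hJcl f hfSe).2 hxs' hhd')
    subst hfe
    by_cases hA : (x f ≠ 0 → tl f ∈ J → hd f ∈ J)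
    · exact Or.inr (hviol hA)
    · push_neg at hA
      exact Or.inl hA
  have hmix : ∀ J J', (J ⊆ W ∧ ClosedOn tl hd x xs ↑(S.erase e) J ∧ J.Nonempty ∧ J ≠ W ∧
      ∑ i ∈ J, θ i ≤ 0) → (J' ⊆ W ∧ ClosedOn tl hd x xs ↑(S.erase e) J' ∧ J'.Nonempty ∧
      J' ≠ W ∧ ∑ i ∈ J', θ i ≤ 0) →
      (x e ≠ 0 ∧ tl e ∈ J ∧ hd e ∉ J) → (xs e ≠ 0 ∧ hd e ∈ J' ∧ tl e ∉ J') → False := by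
    rintro J J' ⟨hJW', hJcl, hJne, hJneW, hJsum⟩ ⟨hJ'W, hJ'cl, hJ'ne, hJ'neW, hJ'sum⟩
      ⟨hx, htlJ, hhdJ⟩ ⟨hxs, hhdJ', htlJ'⟩
    have hJneg : ∑ i ∈ J, θ i < 0 := lt_of_le_of_ne hJsum (hgen J hJW' hJne hJneW)
    have hJ'neg : ∑ i ∈ J', θ i < 0 := lt_of_le_of_ne hJ'sum (hgen J' hJ'W hJ'ne hJ'neW)
    have hclI : ClosedOn tl hd x xs ↑S (J ∩ J') := by
      intro f hfS
      by_cases hfe : f = e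
      · subst hfe
        exact ⟨fun _ h1 => absurd (Finset.mem_inter.1 h1).2 htlJ',
               fun _ h1 => absurd (Finset.mem_inter.1 h1).1 hhdJ⟩
      · have hfSe : f ∈ (↑(S.erase e) : Set E) :=
          Finset.mem_coe.2 (Finset.mem_erase.2 ⟨hfe, Finset.mem_coe.1 hfS⟩)
        have h1 := hJcl f hfSe
        have h2 := hJ'cl f hfSe
        refine ⟨fun hx' ht => ?_, fun hxs' hh => ?_⟩
        · exact Finset.mem_inter.2 ⟨h1.1 hx' (Finset.mem_inter.1 ht).1,
            h2.1 hx' (Finset.mem_inter.1 ht).2⟩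
        · exact Finset.mem_inter.2 ⟨h1.2 hxs' (Finset.mem_inter.1 hh).1,
            h2.2 hxs' (Finset.mem_inter.1 hh).2⟩
    have hclU : ClosedOn tl hd x xs ↑S (J ∪ J') := by
      intro f hfS
      by_cases hfe : f = e
      · subst hfe
        exact ⟨fun _ _ => Finset.mem_union_right _ hhdJ',
               fun _ _ => Finset.mem_union_left _ htlJ⟩
      · have hfSe : f ∈ (↑(S.erase e) : Set E) :=
          Finset.mem_coe.2 (Finset.mem_erase.2 ⟨hfe, Finset.mem_coe.1 hfS⟩)
        have h1 := hJcl f hfSe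
        have h2 := hJ'cl f hfSe
        refine ⟨fun hx' ht => ?_, fun hxs' hh => ?_⟩
        · rcases Finset.mem_union.1 ht with h | h
          · exact Finset.mem_union_left _ (h1.1 hx' h)
          · exact Finset.mem_union_right _ (h2.1 hx' h)
        · rcases Finset.mem_union.1 hh with h | h
          · exact Finset.mem_union_left _ (h1.2 hxs' h)
          · exact Finset.mem_union_right _ (h2.2 hxs' h)
    have hkey : ∑ i ∈ J ∪ J', θ i + ∑ i ∈ J ∩ J', θ i = ∑ i ∈ J, θ i + ∑ i ∈ J', θ i :=
      Finset.sum_union_inter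
    have hIpos : 0 ≤ ∑ i ∈ J ∩ J', θ i := by
      rcases (J ∩ J').eq_empty_or_nonempty with hEq | hne
      · rw [hEq, Finset.sum_empty]
      · apply le_of_lt
        apply hstab _ (Finset.inter_subset_left.trans hJW') hclI hne
        intro hEq
        apply hJneW
        apply Finset.Subset.antisymm hJW'
        rw [← hEq]
        exact Finset.inter_subset_left
    have hUpos : 0 ≤ ∑ i ∈ J ∪ J', θ i := by
      by_cases hEq : J ∪ J' = W
      · rw [hEq, hsum]
      · apply le_of_lt
        exact hstab _ (Finset.union_subset hJW' hJ'W) hclU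
          ⟨tl e, Finset.mem_union_left _ htlJ⟩ hEq
    linarith
  have hDfin : ∃ J₁, (J₁ ⊆ W ∧ ClosedOn tl hd x xs ↑(S.erase e) J₁ ∧ J₁.Nonempty ∧
      J₁ ≠ W ∧ ∑ i ∈ J₁, θ i ≤ 0) ∧ ∀ J, (J ⊆ W ∧ ClosedOn tl hd x xs ↑(S.erase e) J ∧
      J.Nonempty ∧ J ≠ W ∧ ∑ i ∈ J, θ i ≤ 0) → ∑ i ∈ J₁, θ i ≤ ∑ i ∈ J, θ i := by
    obtain ⟨J₁, hJ₁mem, hJ₁min⟩ := Finset.exists_min_image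
      (Finset.univ.filter (fun J => J ⊆ W ∧ ClosedOn tl hd x xs ↑(S.erase e) J ∧
        J.Nonempty ∧ J ≠ W ∧ ∑ i ∈ J, θ i ≤ 0)) (fun J => ∑ i ∈ J, θ i)
      ⟨J₀, Finset.mem_filter.2 ⟨Finset.mem_univ _, hJ₀⟩⟩
    exact ⟨J₁, (Finset.mem_filter.1 hJ₁mem).2,
      fun J hJ => hJ₁min J (Finset.mem_filter.2 ⟨Finset.mem_univ _, hJ⟩)⟩
  obtain ⟨J₁, hJ₁, hmin⟩ := hDfin
  have hIH : ∀ (W' : Finset V) (S' : Finset E) (θ' : V → ℝ),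
      W'.card + S'.card < W.card + S.card → W'.Nonempty → (∑ i ∈ W', θ' i) = 0 →
      (∀ K ⊆ W', K.Nonempty → K ≠ W' → ∑ i ∈ K, θ' i ≠ 0) →
      (∀ f ∈ S', tl f ∈ W' ∧ hd f ∈ W') →
      (∀ J ⊆ W', ClosedOn tl hd x xs ↑S' J → J.Nonempty → J ≠ W' → 0 < ∑ i ∈ J, θ' i) →
      ∃ T, T ⊆ S' ∧ (∀ p ∈ W', ∀ q ∈ W', joinedRel tl hd ↑T p q) ∧ T.card + 1 = W'.card ∧
        ∀ f ∈ T, ((0 < ∑ j ∈ component tl hd (T.erase f) (hd f), θ' j) → x f ≠ 0) ∧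
          (¬ (0 < ∑ j ∈ component tl hd (T.erase f) (hd f), θ' j) → xs f ≠ 0) := by
    intro W' S' θ' hlt hne' hsum' hgen' hin' hstab'
    exact ih _ (by omega) W' S' θ' rfl hne' hsum' hgen' hin' hstab'
  rcases hbreak J₀ hJ₀ with ⟨hx, htl0, hhd0⟩ | ⟨hxs, hhd0, htl0⟩
  · have hall : ∀ J, (J ⊆ W ∧ ClosedOn tl hd x xs ↑(S.erase e) J ∧ J.Nonempty ∧ J ≠ W ∧
        ∑ i ∈ J, θ i ≤ 0) → tl e ∈ J ∧ hd e ∉ J := by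
      intro J hJ
      rcases hbreak J hJ with ⟨_, h2, h3⟩ | hbad
      · exact ⟨h2, h3⟩
      · exact (hmix J₀ J hJ₀ hJ ⟨hx, htl0, hhd0⟩ hbad).elim
    exact contract_step x xs W S θ hsum hgen hin hstab e he (tl e) (hd e)
      (Or.inl ⟨rfl, rfl, hx⟩) hall J₁ hJ₁ hmin hIH
  · have hall : ∀ J, (J ⊆ W ∧ ClosedOn tl hd x xs ↑(S.erase e) J ∧ J.Nonempty ∧ J ≠ W ∧
        ∑ i ∈ J, θ i ≤ 0) → hd e ∈ J ∧ tl e ∉ J := by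
      intro J hJ
      rcases hbreak J hJ with hbad | ⟨_, h2, h3⟩
      · exact (hmix J J₀ hJ hJ₀ hbad ⟨hxs, hhd0, htl0⟩).elim
      · exact ⟨h2, h3⟩
    exact contract_step x xs W S θ hsum hgen hin hstab e he (hd e) (tl e)
      (Or.inr ⟨rfl, rfl, hxs⟩) hall J₁ hJ₁ hmin hIH


end Statement10Helpers

/-- `(x, xs)` is `θ`-stable iff there is a spanning tree `T` such that
`x e ≠ 0` for every `θ`-forward edge `e ∈ T` and `xs e ≠ 0` for every `θ`-backward
edge `e ∈ T`. -/
theorem statement10 {V E : Type} [Fintype V] [Nonempty V] [Fintype E]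
    (tl hd : E → V) (hQ : IsConn tl hd Set.univ)
    (k : Type) [Field k]
    (θ : V → ℝ) (hgen : Generic θ) (hθ : ∑ i, θ i = 0)
    (x xs : E → k) :
    StableSub tl hd θ x xs Finset.univ Set.univ ↔
      ∃ T : Finset E, IsSpanningTree tl hd T ∧
        ∀ e ∈ T,
          ((0 < ∑ j ∈ component tl hd (T.erase e) (hd e), θ j) → x e ≠ 0) ∧
          (¬ (0 < ∑ j ∈ component tl hd (T.erase e) (hd e), θ j) → xs e ≠ 0) := by
  constructor
  · intro hstab
    have hstab' : ∀ J ⊆ (Finset.univ : Finset V),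
        ClosedOn tl hd x xs ↑(Finset.univ : Finset E) J →
        J.Nonempty → J ≠ Finset.univ → 0 < ∑ i ∈ J, θ i := by
      intro J hJ hcl hne hneq
      exact hstab J hJ (fun f _ => hcl f (by simp)) hne hneq
    obtain ⟨T, hTS, hconn, hcard, hcond⟩ := tree_of_stable x xs
      ((Finset.univ : Finset V).card + (Finset.univ : Finset E).card)
      Finset.univ Finset.univ θ rfl Finset.univ_nonempty hθ
      (fun K _ hne hneq => hgen K hne hneq)
      (fun f _ => ⟨Finset.mem_univ _, Finset.mem_univ _⟩) hstab'
    refine ⟨T, ⟨fun a b => hconn a (Finset.mem_univ a) b (Finset.mem_univ b), ?_⟩, hcond⟩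
    rw [← Finset.card_univ]
    exact hcard
  · rintro ⟨T, ⟨hconn, hcard⟩, hcond⟩
    intro J hJW hJcl hJne hJneW
    exact stable_of_tree x xs (Finset.univ : Finset V).card Finset.univ θ T rfl hθ
      (fun K _ hne hneq => hgen K hne hneq)
      (fun f _ => ⟨Finset.mem_univ _, Finset.mem_univ _⟩)
      (fun a _ b _ => hconn a b)
      (by rw [Finset.card_univ]; exact hcard)
      hcond J hJW (fun f _ => hJcl f (Set.mem_univ f)) hJne hJneW

end
end

section
/- Let Q be a connected quiver, k a field, θ : V → ℝ generic with Σ_{i∈V} θ_i = 0, and (x, x*) a θ-stable toric representation of the double quiver of Q. Let e ∈ E, suppose the restriction of (x, x*) to E ∖ {e} is not θ-stable, and suppose every destabilising subset contains t(e) (and hence not h(e)). Let β := min{Σ_{i∈J} θ_i : J destabilising} (so β < 0) and define θ' : V → ℝ by θ'_{t(e)} = θ_{t(e)} − β, θ'_{h(e)} = θ_{h(e)} + β, and θ'_i = θ_i otherwise. Then the restriction of (x, x*) to E ∖ {e} is θ'-semistable but not θ'-stable: every subset J with ∅ ≠ J ⊊ V closed for the restriction satisfies Σ_{i∈J} θ'_i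 ≥ 0, and equality holds for at least one such J. -/
open Classical Finset

noncomputable section

lemma closedOn_inter' {V E k : Type} [Zero k] (tl hd : E → V) (x xs : E → k) (S : Set E)
    {J K : Finset V} (hJ : ClosedOn tl hd x xs S J) (hK : ClosedOn tl hd x xs S K) :
    ClosedOn tl hd x xs S (J ∩ K) := by
  intro f hf
  obtain ⟨hJ1, hJ2⟩ := hJ f hf
  obtain ⟨hK1, hK2⟩ := hK f hf
  constructor
  · intro hx ht
    rw [Finset.mem_inter] at ht ⊢
    exact ⟨hJ1 hx ht.1, hK1 hx ht.2⟩
  · intro hx ht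
    rw [Finset.mem_inter] at ht ⊢
    exact ⟨hJ2 hx ht.1, hK2 hx ht.2⟩

lemma closedOn_union' {V E k : Type} [Zero k] (tl hd : E → V) (x xs : E → k) (S : Set E)
    {J K : Finset V} (hJ : ClosedOn tl hd x xs S J) (hK : ClosedOn tl hd x xs S K) :
    ClosedOn tl hd x xs S (J ∪ K) := by
  intro f hf
  obtain ⟨hJ1, hJ2⟩ := hJ f hf
  obtain ⟨hK1, hK2⟩ := hK f hf
  constructor
  · intro hx ht
    rw [Finset.mem_union] at ht ⊢
    exact ht.imp (hJ1 hx) (hK1 hx)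
  · intro hx ht
    rw [Finset.mem_union] at ht ⊢
    exact ht.imp (hJ2 hx) (hK2 hx)

/-- with `β` the minimum of `Σ_J θ` over destabilising subsets `J` (so
`β < 0`) and `θ'` obtained from `θ` by subtracting `β` at `t(e)` and adding `β` at
`h(e)`, the restriction of `(x, xs)` to `E ∖ {e}` is strictly `θ'`-semistable. -/
theorem statement12 {V E : Type} [Fintype V] [Nonempty V] [Fintype E]
    (tl hd : E → V) (hQ : IsConn tl hd Set.univ)
    (k : Type) [Field k]
    (θ : V → ℝ) (hgen : Generic θ) (hθ : ∑ i, θ i = 0)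
    (x xs : E → k)
    (hstab : StableSub tl hd θ x xs Finset.univ Set.univ)
    (e : E)
    (hunst : ¬ StableSub tl hd θ x xs Finset.univ {f | f ≠ e})
    (htl : ∀ J, DestabSub tl hd θ x xs Finset.univ {f | f ≠ e} J → tl e ∈ J)
    (β : ℝ)
    (hβ : β = sInf {s : ℝ | ∃ J, DestabSub tl hd θ x xs Finset.univ {f | f ≠ e} J ∧
      ∑ i ∈ J, θ i = s}) :
    β < 0 ∧
    (∀ J : Finset V, ClosedOn tl hd x xs {f | f ≠ e} J → J.Nonempty →
      J ≠ Finset.univ →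
      0 ≤ ∑ i ∈ J, (if i = tl e then θ i - β else if i = hd e then θ i + β else θ i)) ∧
    (∃ J : Finset V, ClosedOn tl hd x xs {f | f ≠ e} J ∧ J.Nonempty ∧
      J ≠ Finset.univ ∧
      ∑ i ∈ J, (if i = tl e then θ i - β else if i = hd e then θ i + β else θ i) = 0) := by
  classical
  -- there exists a destabilising set
  have hex : ∃ J, DestabSub tl hd θ x xs Finset.univ {f | f ≠ e} J := by
    unfold StableSub at hunst
    push_neg at hunst
    obtain ⟨J, hJW, hcl, hne, hnu, hle⟩ := hunst
    exact ⟨J, hJW, hne, hnu, hcl, hle⟩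
  set s : Set ℝ := {s : ℝ | ∃ J, DestabSub tl hd θ x xs Finset.univ {f | f ≠ e} J ∧
      ∑ i ∈ J, θ i = s} with hsdef
  have hfin : s.Finite := by
    apply Set.Finite.subset (Set.finite_range (fun J : Finset V => ∑ i ∈ J, θ i))
    rintro r ⟨J, _, hJ⟩
    exact ⟨J, hJ⟩
  have hsne : s.Nonempty := by
    obtain ⟨J, hJ⟩ := hex
    exact ⟨_, J, hJ, rfl⟩
  have hmem : β ∈ s := by rw [hβ]; exact hsne.csInf_mem hfin
  have hlb : ∀ J, DestabSub tl hd θ x xs Finset.univ {f | f ≠ e} J →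
      β ≤ ∑ i ∈ J, θ i := by
    intro J hJ
    rw [hβ]
    exact csInf_le hfin.bddBelow ⟨J, hJ, rfl⟩
  obtain ⟨J₁, hJ₁, hJ₁β⟩ := hmem
  have hJ₁' := hJ₁
  obtain ⟨hJ₁W, hJ₁ne, hJ₁nu, hJ₁cl, hJ₁le⟩ := hJ₁
  -- destabilising sets don't contain `hd e`
  have hnoh : ∀ J, DestabSub tl hd θ x xs Finset.univ {f | f ≠ e} J → hd e ∉ J := by
    intro J hJ hhd
    obtain ⟨hJW, hJne, hJnu, hJcl, hJle⟩ := hJ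
    have htlJ := htl J ⟨hJW, hJne, hJnu, hJcl, hJle⟩
    have hcl' : ClosedOn tl hd x xs Set.univ J := by
      intro f _
      by_cases hfe : f = e
      · subst hfe; exact ⟨fun _ _ => hhd, fun _ _ => htlJ⟩
      · exact hJcl f hfe
    exact absurd (hstab J hJW hcl' hJne hJnu) (not_lt.2 hJle)
  have hh1 : hd e ∉ J₁ := hnoh J₁ hJ₁'
  have ht1 : tl e ∈ J₁ := htl J₁ hJ₁'
  have hth : tl e ≠ hd e := fun h => hh1 (h ▸ ht1)
  have hβneg : β < 0 := by
    have h1 : β ≤ 0 := by rw [← hJ₁β]; exact hJ₁le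
    have h2 : β ≠ 0 := by rw [← hJ₁β]; exact hgen J₁ hJ₁ne hJ₁nu
    exact lt_of_le_of_ne h1 h2
  -- rewriting the θ' sum
  have hsum : ∀ J : Finset V,
      ∑ i ∈ J, (if i = tl e then θ i - β else if i = hd e then θ i + β else θ i)
        = ∑ i ∈ J, θ i + (if tl e ∈ J then -β else 0) + (if hd e ∈ J then β else 0) := by
    intro J
    have hcong : ∀ i ∈ J,
        (if i = tl e then θ i - β else if i = hd e then θ i + β else θ i)
          = θ i + ((if i = tl e then -β else 0) + (if i = hd e then β else 0)) := by
      intro i _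
      rcases eq_or_ne i (tl e) with h1 | h1
      · rw [if_pos h1, if_pos h1, if_neg (h1 ▸ hth)]; ring
      · rw [if_neg h1, if_neg h1]
        rcases eq_or_ne i (hd e) with h2 | h2
        · rw [if_pos h2, if_pos h2]; ring
        · rw [if_neg h2, if_neg h2]; ring
    rw [Finset.sum_congr rfl hcong, Finset.sum_add_distrib, Finset.sum_add_distrib,
      Finset.sum_ite_eq' J (tl e) (fun _ => -β), Finset.sum_ite_eq' J (hd e) (fun _ => β)]
    ring
  refine ⟨hβneg, ?_, ?_⟩
  · intro J hcl hne hnu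
    rw [hsum J]
    by_cases htJ : tl e ∈ J <;> by_cases hhJ : hd e ∈ J
    · -- both endpoints in J : J is closed for all edges
      rw [if_pos htJ, if_pos hhJ]
      have hclu : ClosedOn tl hd x xs Set.univ J := by
        intro f _
        by_cases hfe : f = e
        · subst hfe; exact ⟨fun _ _ => hhJ, fun _ _ => htJ⟩
        · exact hcl f hfe
      have := hstab J (Finset.subset_univ J) hclu hne hnu
      linarith
    · -- tl e ∈ J, hd e ∉ J
      rw [if_pos htJ, if_neg hhJ]
      by_cases hle : ∑ i ∈ J, θ i ≤ 0
      · have := hlb J ⟨Finset.subset_univ J, hne, hnu, hcl, hle⟩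
        linarith
      · push_neg at hle; linarith
    · -- tl e ∉ J, hd e ∈ J : compare with J₁ via union and intersection
      rw [if_neg htJ, if_pos hhJ]
      have hclK : ClosedOn tl hd x xs Set.univ (J ∪ J₁) := by
        intro f _
        by_cases hfe : f = e
        · subst hfe
          exact ⟨fun _ _ => Finset.mem_union_left _ hhJ,
            fun _ _ => Finset.mem_union_right _ ht1⟩
        · exact (closedOn_union' tl hd x xs _ hcl hJ₁cl) f hfe
      have hclI : ClosedOn tl hd x xs Set.univ (J ∩ J₁) := by
        intro f _
        by_cases hfe : f = e
        · subst hfe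
          constructor
          · intro _ hm; exact absurd (Finset.mem_inter.1 hm).1 htJ
          · intro _ hm; exact absurd (Finset.mem_inter.1 hm).2 hh1
        · exact (closedOn_inter' tl hd x xs _ hcl hJ₁cl) f hfe
      have hK : 0 ≤ ∑ i ∈ J ∪ J₁, θ i := by
        by_cases hKu : J ∪ J₁ = Finset.univ
        · rw [hKu]; exact le_of_eq hθ.symm
        · exact le_of_lt (hstab _ (Finset.subset_univ _) hclK
            (hne.mono Finset.subset_union_left) hKu)
      have hI : 0 ≤ ∑ i ∈ J ∩ J₁, θ i := by
        rcases Finset.eq_empty_or_nonempty (J ∩ J₁) with hI0 | hIne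
        · rw [hI0]; simp
        · have hInu : J ∩ J₁ ≠ Finset.univ := by
            intro hu
            have : tl e ∈ J ∩ J₁ := by rw [hu]; exact Finset.mem_univ _
            exact htJ (Finset.mem_inter.1 this).1
          exact le_of_lt (hstab _ (Finset.subset_univ _) hclI hIne hInu)
      have hsum2 : ∑ i ∈ J ∪ J₁, θ i + ∑ i ∈ J ∩ J₁, θ i
          = ∑ i ∈ J, θ i + ∑ i ∈ J₁, θ i := Finset.sum_union_inter
      linarith [hJ₁β]
    · -- neither endpoint in J
      rw [if_neg htJ, if_neg hhJ]
      have hclu : ClosedOn tl hd x xs Set.univ J := by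
        intro f _
        by_cases hfe : f = e
        · subst hfe
          exact ⟨fun _ h => absurd h htJ, fun _ h => absurd h hhJ⟩
        · exact hcl f hfe
      have := hstab J (Finset.subset_univ J) hclu hne hnu
      linarith
  · refine ⟨J₁, hJ₁cl, hJ₁ne, hJ₁nu, ?_⟩
    rw [hsum J₁, if_pos ht1, if_neg hh1, hJ₁β]
    ring

end
end
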